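/- arXiv:1506.01735 — 4 statements merged into one kernel-verified Lean document; each statement's English description precedes it below -/
import Mathlib

section
/- Let f : ℝ^n → ℝ be a nonzero linear form and v a nonzero vector in ℝ^n. Then the projective distance from [v] to the projective hyperplane [ker f] satisfies d([v], [ker f]) = |f(v)| / (‖f‖·‖v‖), where d([v],[w]) = ‖v ∧ w‖/(‖v‖‖w‖) and the distance to the hyperplane is the infimum of d([v],[w]) over nonzero w ∈ ker f. -/
open scoped BigOperators

noncomputable def nrm {n : ℕ} (v : Fin n → ℝ) : ℝ := Real.sqrt (∑ i, v i ^ 2)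

noncomputable def wedgeSq {n : ℕ} (v w : Fin n → ℝ) : ℝ :=
  ∑ i, ∑ j, if i < j then (v i * w j - v j * w i) ^ 2 else 0

/-- Projective distance between the lines spanned by `v` and `w`. -/
noncomputable def pd {n : ℕ} (v w : Fin n → ℝ) : ℝ :=
  Real.sqrt (wedgeSq v w) / (nrm v * nrm w)

lemma sum_sq_pos {n : ℕ} {v : Fin n → ℝ} (hv : v ≠ 0) : 0 < ∑ i, v i ^ 2 := by
  obtain ⟨i, hi⟩ := Function.ne_iff.mp hv
  exact Finset.sum_pos' (fun j _ => sq_nonneg _)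
    ⟨i, Finset.mem_univ i, sq_pos_of_ne_zero hi⟩

lemma lagrange {n : ℕ} (v w : Fin n → ℝ) :
    wedgeSq v w = (∑ i, v i ^ 2) * (∑ i, w i ^ 2) - (∑ i, v i * w i) ^ 2 := by
  have h1 : ∀ i j : Fin n, (v i * w j - v j * w i) ^ 2 =
      (if i < j then (v i * w j - v j * w i) ^ 2 else 0)
      + (if j < i then (v i * w j - v j * w i) ^ 2 else 0) := by
    intro i j
    rcases lt_trichotomy i j with h | h | h
    · simp [h, not_lt_of_gt h]
    · simp [h]
    · simp [h, not_lt_of_gt h]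
  have full : ∑ i, ∑ j, (v i * w j - v j * w i) ^ 2 = 2 * wedgeSq v w := by
    calc ∑ i, ∑ j, (v i * w j - v j * w i) ^ 2
        = ∑ i, ∑ j, ((if i < j then (v i * w j - v j * w i) ^ 2 else 0)
          + (if j < i then (v i * w j - v j * w i) ^ 2 else 0)) :=
          Finset.sum_congr rfl fun i _ => Finset.sum_congr rfl fun j _ => h1 i j
      _ = wedgeSq v w + ∑ i, ∑ j, (if j < i then (v i * w j - v j * w i) ^ 2 else 0) := by
          simp [Finset.sum_add_distrib, wedgeSq]
      _ = 2 * wedgeSq v w := by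
          rw [Finset.sum_comm (f := fun i j => if j < i then (v i * w j - v j * w i) ^ 2 else 0)]
          rw [show (∑ j : Fin n, ∑ i : Fin n, if j < i then (v i * w j - v j * w i) ^ 2 else 0)
              = wedgeSq v w from
            Finset.sum_congr rfl fun i _ => Finset.sum_congr rfl fun j _ => by
              rw [show (v j * w i - v i * w j)^2 = (v i * w j - v j * w i)^2 from by ring]]
          ring
  have e1 : (∑ i, v i * w i) ^ 2 = ∑ i, ∑ j, (v i * w i) * (v j * w j) := by
    rw [sq, Finset.sum_mul_sum]
  have e2 : (∑ i, v i ^ 2) * (∑ i, w i ^ 2) = ∑ i, ∑ j, v i ^ 2 * w j ^ 2 :=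
    Finset.sum_mul_sum _ _ _ _
  have e3 : (∑ i, v i ^ 2) * (∑ i, w i ^ 2) = ∑ i, ∑ j, v j ^ 2 * w i ^ 2 := by
    rw [e2, Finset.sum_comm]
  have expand : ∑ i, ∑ j, (v i * w j - v j * w i) ^ 2 =
      2 * ((∑ i, v i ^ 2) * (∑ i, w i ^ 2) - (∑ i, v i * w i) ^ 2) := by
    calc ∑ i, ∑ j, (v i * w j - v j * w i) ^ 2
        = ∑ i, ∑ j, (v i ^ 2 * w j ^ 2 + v j ^ 2 * w i ^ 2
            - 2 * ((v i * w i) * (v j * w j))) :=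
          Finset.sum_congr rfl fun i _ => Finset.sum_congr rfl fun j _ => by ring
      _ = (∑ i, ∑ j, v i ^ 2 * w j ^ 2) + (∑ i, ∑ j, v j ^ 2 * w i ^ 2)
            - 2 * (∑ i, ∑ j, (v i * w i) * (v j * w j)) := by
          simp [Finset.sum_add_distrib, Finset.sum_sub_distrib, Finset.mul_sum]
      _ = 2 * ((∑ i, v i ^ 2) * (∑ i, w i ^ 2) - (∑ i, v i * w i) ^ 2) := by
          rw [← e1, ← e2, ← e3]; ring
  rw [full] at expand
  linarith

lemma wedgeSq_nonneg {n : ℕ} (v w : Fin n → ℝ) : 0 ≤ wedgeSq v w := by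
  refine Finset.sum_nonneg fun i _ => Finset.sum_nonneg fun j _ => ?_
  split <;> positivity

lemma pd_eq_sqrt {n : ℕ} (v w : Fin n → ℝ) :
    pd v w = Real.sqrt (wedgeSq v w / ((∑ i, v i ^ 2) * (∑ i, w i ^ 2))) := by
  rw [pd, nrm, nrm, Real.sqrt_div (wedgeSq_nonneg v w),
    Real.sqrt_mul (Finset.sum_nonneg fun i _ => sq_nonneg _)]

/-- For a nonzero linear form `f` on `ℝ^n` (`n ≥ 2`) and a nonzero vector `v`, the
projective distance from `[v]` to the projective hyperplane `[ker f]`, i.e. the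
infimum of `d([v],[w])` over nonzero `w ∈ ker f`, equals `|f(v)|/(‖f‖‖v‖)`. -/
theorem dist_to_kernel_hyperplane {n : ℕ} (hn : 2 ≤ n)
    (f : (Fin n → ℝ) →ₗ[ℝ] ℝ) (hf : f ≠ 0) (v : Fin n → ℝ) (hv : v ≠ 0)
    (fdual : Fin n → ℝ) (hfdual : ∀ x, f x = ∑ i, fdual i * x i) :
    sInf {t : ℝ | ∃ w : Fin n → ℝ, w ≠ 0 ∧ f w = 0 ∧ t = pd v w} =
      |f v| / (nrm fdual * nrm v) := by
  have ha0 : fdual ≠ 0 := by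
    intro h
    apply hf
    apply LinearMap.ext
    intro x
    rw [hfdual]
    simp [h]
  set a := fdual with hadef
  set A := ∑ i, a i ^ 2 with hAdef
  set V := ∑ i, v i ^ 2 with hVdef
  set D := ∑ i, a i * v i with hDdef
  have hA : 0 < A := sum_sq_pos ha0
  have hV : 0 < V := sum_sq_pos hv
  have hfv : f v = D := hfdual v
  set T := Real.sqrt (D ^ 2 / (A * V)) with hTdef
  -- expansion helper
  have hexp : ∀ c d : ℝ, (∑ i, (c * v i - d * a i) ^ 2)
      = c ^ 2 * V - 2 * (c * d) * D + d ^ 2 * A := by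
    intro c d
    calc (∑ i, (c * v i - d * a i) ^ 2)
        = ∑ i, (c ^ 2 * v i ^ 2 - 2 * (c * d) * (a i * v i) + d ^ 2 * a i ^ 2) :=
          Finset.sum_congr rfl fun i _ => by ring
      _ = c ^ 2 * V - 2 * (c * d) * D + d ^ 2 * A := by
          rw [Finset.sum_add_distrib, Finset.sum_sub_distrib, ← Finset.mul_sum,
            ← Finset.mul_sum, ← Finset.mul_sum, hVdef, hDdef, hAdef]
  -- the target value as stated equals T
  have hT : |f v| / (nrm fdual * nrm v) = T := by
    rw [hfv, hTdef, nrm, nrm, ← hadef, ← hAdef, ← hVdef,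
      Real.sqrt_div (sq_nonneg D), Real.sqrt_sq_eq_abs,
      Real.sqrt_mul hA.le]
  -- lower bound
  have lb : ∀ t ∈ {t : ℝ | ∃ w : Fin n → ℝ, w ≠ 0 ∧ f w = 0 ∧ t = pd v w}, T ≤ t := by
    rintro t ⟨w, hwne, hfw, rfl⟩
    have hw0 : ∑ i, a i * w i = 0 := by rw [← hfdual w]; exact hfw
    set W := ∑ i, w i ^ 2 with hWdef
    have hW : 0 < W := sum_sq_pos hwne
    set P := ∑ i, v i * w i with hPdef
    rw [pd_eq_sqrt, ← hVdef, ← hWdef]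
    apply Real.sqrt_le_sqrt
    rw [lagrange, ← hVdef, ← hWdef, ← hPdef]
    rw [div_le_div_iff₀ (mul_pos hA hV) (mul_pos hV hW)]
    -- Cauchy-Schwarz with u i = A * v i - D * a i
    have hCS := Finset.sum_mul_sq_le_sq_mul_sq Finset.univ w (fun i => A * v i - D * a i)
    have hsum : ∑ i, w i * (A * v i - D * a i) = A * P := by
      calc ∑ i, w i * (A * v i - D * a i)
          = ∑ i, (A * (v i * w i) - D * (a i * w i)) :=
            Finset.sum_congr rfl fun i _ => by ring
        _ = A * P - D * 0 := by
            rw [Finset.sum_sub_distrib, ← Finset.mul_sum, ← Finset.mul_sum, hPdef, hw0]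
        _ = A * P := by ring
    have hU : (∑ i, (A * v i - D * a i) ^ 2) = A ^ 2 * V - 2 * (A * D) * D + D ^ 2 * A :=
      hexp A D
    rw [hsum, hU] at hCS
    have key : A * P ^ 2 ≤ W * (A * V - D ^ 2) := by
      have h2 : A * (A * P ^ 2) ≤ A * (W * (A * V - D ^ 2)) := by nlinarith [hCS]
      exact (mul_le_mul_iff_right₀ hA).mp h2
    nlinarith [mul_le_mul_of_nonneg_left key hV.le]
  -- membership: the infimum is attained
  have memS : T ∈ {t : ℝ | ∃ w : Fin n → ℝ, w ≠ 0 ∧ f w = 0 ∧ t = pd v w} := by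
    by_cases h0 : (fun i => A * v i - D * a i) = 0
    · -- v is parallel to a
      have hpar : ∀ i, A * v i = D * a i := by
        intro i
        have := congrFun h0 i
        simp only [Pi.zero_apply] at this
        linarith
      have hAV : A * V = D * D := by
        calc A * V = ∑ i, (A * v i) * v i := by
              rw [hVdef, Finset.mul_sum]
              exact Finset.sum_congr rfl fun i _ => by ring
          _ = ∑ i, D * (a i * v i) :=
              Finset.sum_congr rfl fun i _ => by rw [hpar i]; ring
          _ = D * D := by rw [← Finset.mul_sum, ← hDdef]
      obtain ⟨ia, hia⟩ := Function.ne_iff.mp ha0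
      simp only [Pi.zero_apply] at hia
      obtain ⟨j, hj⟩ : ∃ j : Fin n, j ≠ ia :=
        Fintype.exists_ne_of_one_lt_card (by simp; omega) ia
      set w : Fin n → ℝ :=
        fun k => a j * (if k = ia then 1 else 0) - a ia * (if k = j then 1 else 0) with hwdef
      have hwne : w ≠ 0 := by
        apply Function.ne_iff.mpr
        refine ⟨j, ?_⟩
        simp [hwdef, hj, hia]
      have hw0 : ∑ i, a i * w i = 0 := by
        simp only [hwdef, mul_sub, mul_ite, mul_one, mul_zero, Finset.sum_sub_distrib]
        rw [Finset.sum_ite_eq' Finset.univ ia (fun x => a x * a j),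
          Finset.sum_ite_eq' Finset.univ j (fun x => a x * a ia)]
        simp only [Finset.mem_univ, if_true]
        ring
      have hfw : f w = 0 := by rw [hfdual w]; exact hw0
      have hW : 0 < ∑ i, w i ^ 2 := sum_sq_pos hwne
      have hP : ∑ i, v i * w i = 0 := by
        have hAP : A * (∑ i, v i * w i) = D * (∑ i, a i * w i) := by
          rw [Finset.mul_sum, Finset.mul_sum]
          refine Finset.sum_congr rfl fun i _ => ?_
          rw [show A * (v i * w i) = (A * v i) * w i from by ring, hpar i]
          ring
        rw [hw0, mul_zero] at hAP
        rcases mul_eq_zero.mp hAP with h | h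
        · exact absurd h (ne_of_gt hA)
        · exact h
      refine ⟨w, hwne, hfw, ?_⟩
      rw [pd_eq_sqrt, ← hVdef, lagrange, ← hVdef, hP, hTdef]
      congr 1
      rw [show D ^ 2 = A * V from by rw [hAV]; ring]
      rw [div_self (ne_of_gt (mul_pos hA hV))]
      rw [show (0:ℝ) ^ 2 = 0 from by norm_num, sub_zero,
        div_self (ne_of_gt (mul_pos hV hW))]
    · -- use the projection w = A • v - D • a
      set w : Fin n → ℝ := fun i => A * v i - D * a i with hwdef
      have hwne : w ≠ 0 := h0
      have hker : ∑ i, a i * w i = 0 := by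
        calc ∑ i, a i * w i
            = ∑ i, (A * (a i * v i) - D * a i ^ 2) :=
              Finset.sum_congr rfl fun i _ => by rw [hwdef]; ring
          _ = A * D - D * A := by
              rw [Finset.sum_sub_distrib, ← Finset.mul_sum, ← Finset.mul_sum, ← hDdef, ← hAdef]
          _ = 0 := by ring
      have hfw : f w = 0 := by rw [hfdual w]; exact hker
      have hWeq : (∑ i, w i ^ 2) = A ^ 2 * V - 2 * (A * D) * D + D ^ 2 * A := hexp A D
      have hWpos : 0 < ∑ i, w i ^ 2 := sum_sq_pos hwne
      have hKpos : 0 < A * V - D ^ 2 := by nlinarith [hWpos, hWeq, hA]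
      have hPeq : ∑ i, v i * w i = A * V - D * D := by
        calc ∑ i, v i * w i
            = ∑ i, (A * v i ^ 2 - D * (a i * v i)) :=
              Finset.sum_congr rfl fun i _ => by rw [hwdef]; ring
          _ = A * V - D * D := by
              rw [Finset.sum_sub_distrib, ← Finset.mul_sum, ← Finset.mul_sum, ← hDdef, ← hVdef]
      refine ⟨w, hwne, hfw, ?_⟩
      rw [pd_eq_sqrt, ← hVdef, lagrange, ← hVdef, hPeq, hWeq, hTdef]
      congr 1
      rw [div_eq_div_iff (ne_of_gt (mul_pos hA hV))
        (ne_of_gt (by nlinarith [hKpos, hA, hV] : (0:ℝ) < V * (A ^ 2 * V - 2 * (A * D) * D + D ^ 2 * A)))]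
      ring
  rw [hT]
  exact le_antisymm (csInf_le ⟨T, lb⟩ memS) (le_csInf ⟨T, memS⟩ lb)
end

section
/- Let γ = diag(a₁,…,a_n) ∈ SL_n(ℝ) with a₁ ≥ ⋯ ≥ a_n > 0, let 1 ≤ k < n, let ε > 0, and suppose a_{k+1}/a_k ≤ ε². Let H be the projective hyperplane in P(Λ^k ℝ^n) spanned by the basis wedges e_{i₁}∧⋯∧e_{i_k} other than e₁∧⋯∧e_k, and let v₀ = [e₁∧⋯∧e_k]. Then for any nonzero v ∈ Λ^k ℝ^n with d([v], H) ≥ ε (equivalently |v_{1,2,…,k}|/‖v‖ ≥ ε), one has d([Λ^k(γ) v], v₀) ≤ ε. -/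
open scoped BigOperators

/-- Euclidean norm with respect to an orthonormal basis indexed by `ι`. -/
noncomputable def nrmG {ι : Type*} [Fintype ι] (v : ι → ℝ) : ℝ := Real.sqrt (∑ i, v i ^ 2)

noncomputable def innerpG {ι : Type*} [Fintype ι] (v w : ι → ℝ) : ℝ := ∑ i, v i * w i

/-- Projective distance `‖v∧w‖/(‖v‖‖w‖)`, using `‖v∧w‖² = ‖v‖²‖w‖² − ⟨v,w⟩²`. -/
noncomputable def pdG {ι : Type*} [Fintype ι] (v w : ι → ℝ) : ℝ :=
  Real.sqrt (nrmG v ^ 2 * nrmG w ^ 2 - innerpG v w ^ 2) / (nrmG v * nrmG w)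



private lemma prod_le_prod_top {n k : ℕ} (a : Fin n → ℝ) (ha_pos : ∀ i, 0 < a i)
    (ha_mono : ∀ i j : Fin n, i ≤ j → a j ≤ a i)
    (t : Finset (Fin n)) (ht : ∀ i : Fin n, i ∈ t ↔ (i : ℕ) < k) (htc : t.card = k) :
    ∀ m : ℕ, ∀ s : Finset (Fin n), s.card = k → (s \ t).card = m →
      ∏ i ∈ s, a i ≤ ∏ i ∈ t, a i := by
  intro m
  induction m with
  | zero =>
    intro s hs hsd
    have hsub : s ⊆ t := Finset.sdiff_eq_empty_iff_subset.mp (Finset.card_eq_zero.mp hsd)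
    have : s = t := Finset.eq_of_subset_of_card_le hsub (by omega)
    rw [this]
  | succ m ih =>
    intro s hs hsd
    have hne : (s \ t).Nonempty := by rw [← Finset.card_pos, hsd]; omega
    obtain ⟨j, hj⟩ := hne
    have hjs : j ∈ s := (Finset.mem_sdiff.mp hj).1
    have hjt : j ∉ t := (Finset.mem_sdiff.mp hj).2
    have hts : (t \ s).Nonempty := by
      rw [← Finset.card_pos, Finset.card_sdiff_comm (by omega)]
      omega
    obtain ⟨m', hm'⟩ := hts
    have hm't : m' ∈ t := (Finset.mem_sdiff.mp hm').1
    have hm's : m' ∉ s := (Finset.mem_sdiff.mp hm').2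
    have hm'e : m' ∉ s.erase j := fun h => hm's (Finset.mem_of_mem_erase h)
    have hk1 : 1 ≤ k := by rw [← hs]; exact Finset.card_pos.mpr ⟨j, hjs⟩
    have hs'c : (insert m' (s.erase j)).card = k := by
      rw [Finset.card_insert_of_notMem hm'e, Finset.card_erase_of_mem hjs, hs]; omega
    have hsd' : ((insert m' (s.erase j)) \ t).card = m := by
      have hEq : (insert m' (s.erase j)) \ t = (s \ t).erase j := by
        ext i
        simp only [Finset.mem_sdiff, Finset.mem_insert, Finset.mem_erase]
        constructor
        · rintro ⟨(rfl | ⟨hij, his⟩), hit⟩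
          · exact absurd hm't hit
          · exact ⟨hij, his, hit⟩
        · rintro ⟨hij, his, hit⟩
          exact ⟨Or.inr ⟨hij, his⟩, hit⟩
      rw [hEq, Finset.card_erase_of_mem hj, hsd]; omega
    have hprod : ∏ i ∈ s, a i ≤ ∏ i ∈ insert m' (s.erase j), a i := by
      rw [← Finset.mul_prod_erase s a hjs, Finset.prod_insert hm'e]
      refine mul_le_mul_of_nonneg_right ?_ (Finset.prod_nonneg fun i _ => (ha_pos i).le)
      apply ha_mono
      have h1 : (m' : ℕ) < k := (ht m').mp hm't
      have h2 : ¬ (j : ℕ) < k := fun h => hjt ((ht j).mpr h)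
      exact Fin.le_def.mpr (by omega)
    exact hprod.trans (ih _ hs'c hsd')

private lemma prod_le_eps {n k : ℕ} (hk1 : 1 ≤ k) (hkn : k < n)
    (a : Fin n → ℝ) (ha_pos : ∀ i, 0 < a i)
    (ha_mono : ∀ i j : Fin n, i ≤ j → a j ≤ a i)
    (ε : ℝ) (hε0 : 0 < ε)
    (hgap : a ⟨k, hkn⟩ / a ⟨k - 1, Nat.lt_of_le_of_lt (Nat.sub_le k 1) hkn⟩ ≤ ε ^ 2)
    (t : Finset (Fin n)) (ht : ∀ i : Fin n, i ∈ t ↔ (i : ℕ) < k) (htc : t.card = k)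
    (s : Finset (Fin n)) (hs : s.card = k) (hst : s ≠ t) :
    ∏ i ∈ s, a i ≤ ε ^ 2 * ∏ i ∈ t, a i := by
  have hne : (s \ t).Nonempty := by
    rw [Finset.sdiff_nonempty]
    intro hsub
    exact hst (Finset.eq_of_subset_of_card_le hsub (by omega))
  obtain ⟨j, hj⟩ := hne
  have hjs : j ∈ s := (Finset.mem_sdiff.mp hj).1
  have hjt : j ∉ t := (Finset.mem_sdiff.mp hj).2
  have hts : (t \ s).Nonempty := by
    rw [← Finset.card_pos, Finset.card_sdiff_comm (by omega), Finset.card_pos,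
      Finset.sdiff_nonempty]
    intro hsub
    exact hst (Finset.eq_of_subset_of_card_le hsub (by omega))
  obtain ⟨m', hm'⟩ := hts
  have hm't : m' ∈ t := (Finset.mem_sdiff.mp hm').1
  have hm's : m' ∉ s := (Finset.mem_sdiff.mp hm').2
  have hm'e : m' ∉ s.erase j := fun h => hm's (Finset.mem_of_mem_erase h)
  have hs'c : (insert m' (s.erase j)).card = k := by
    rw [Finset.card_insert_of_notMem hm'e, Finset.card_erase_of_mem hjs, hs]; omega
  -- a j ≤ ε^2 * a m'
  have hkm1 : (k - 1 : ℕ) < n := by omega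
  have hja : a j ≤ a ⟨k, hkn⟩ := by
    apply ha_mono
    have h2 : ¬ (j : ℕ) < k := fun h => hjt ((ht j).mpr h)
    exact Fin.le_def.mpr (by simpa using by omega)
  have hma : a ⟨k - 1, hkm1⟩ ≤ a m' := by
    apply ha_mono
    have h1 : (m' : ℕ) < k := (ht m').mp hm't
    exact Fin.le_def.mpr (by simpa using by omega)
  have hgap' : a ⟨k, hkn⟩ ≤ ε ^ 2 * a ⟨k - 1, hkm1⟩ := by
    rw [div_le_iff₀ (ha_pos _)] at hgap
    linarith [hgap]
  have hjm : a j ≤ ε ^ 2 * a m' := by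
    have hε2 : (0:ℝ) ≤ ε ^ 2 := sq_nonneg ε
    nlinarith [ha_pos m', ha_pos ⟨k - 1, hkm1⟩]
  have hQ : (0:ℝ) ≤ ∏ i ∈ s.erase j, a i := Finset.prod_nonneg fun i _ => (ha_pos i).le
  have h1 : ∏ i ∈ s, a i ≤ ε ^ 2 * ∏ i ∈ insert m' (s.erase j), a i := by
    rw [← Finset.mul_prod_erase s a hjs, Finset.prod_insert hm'e, ← mul_assoc]
    exact mul_le_mul_of_nonneg_right hjm hQ
  refine h1.trans ?_
  exact mul_le_mul_of_nonneg_left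
    (prod_le_prod_top a ha_pos ha_mono t ht htc _ _ hs'c rfl) (sq_nonneg ε)

set_option maxHeartbeats 1000000 in
/-- ε-contraction on the exterior power `P(Λ^k ℝ^n)` for a diagonal matrix
`γ = diag(a₁ ≥ ⋯ ≥ a_n > 0)` with `a_{k+1}/a_k ≤ ε²`: any `[v]` at distance at least
`ε` from the hyperplane `H` (equivalently `|v_{1,…,k}|/‖v‖ ≥ ε`) is sent by `Λ^k(γ)`
into the `ε`-ball around `v₀ = [e₁∧⋯∧e_k]`.  Here `Λ^k ℝ^n` has orthonormal basis
indexed by `k`-element subsets of `Fin n`, and `Λ^k(γ)` multiplies the coordinate at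
`s` by `∏_{i∈s} a_i`; `s₀ = {1,…,k}` indexes the top wedge `e₁∧⋯∧e_k`. -/
theorem eps_contracting_exterior_power {n k : ℕ} (hk1 : 1 ≤ k) (hkn : k < n)
    (a : Fin n → ℝ) (ha_pos : ∀ i, 0 < a i) (ha_mono : ∀ i j : Fin n, i ≤ j → a j ≤ a i)
    (ha_det : ∏ i, a i = 1)
    (ε : ℝ) (hε0 : 0 < ε)
    (hgap : a ⟨k, hkn⟩ / a ⟨k - 1, by omega⟩ ≤ ε ^ 2)
    (s₀ : {s : Finset (Fin n) // s.card = k})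
    (hs₀ : ∀ i : Fin n, i ∈ s₀.1 ↔ (i : ℕ) < k)
    (v : {s : Finset (Fin n) // s.card = k} → ℝ) (hv : v ≠ 0)
    (hfar : ε ≤ |v s₀| / nrmG v) :
    pdG (fun s => (∏ i ∈ s.1, a i) * v s)
        (fun s => if s = s₀ then (1 : ℝ) else 0) ≤ ε := by
  classical
  set w : {s : Finset (Fin n) // s.card = k} → ℝ := fun s => (∏ i ∈ s.1, a i) * v s with hw
  set e : {s : Finset (Fin n) // s.card = k} → ℝ := fun s => if s = s₀ then (1:ℝ) else 0
    with he
  set P : ℝ := ∏ i ∈ s₀.1, a i with hPdef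
  have hP : 0 < P := Finset.prod_pos fun i _ => ha_pos i
  -- norm of v positive
  have hnv : 0 < nrmG v := by
    rcases (Real.sqrt_nonneg (∑ s, v s ^ 2)).lt_or_eq with h | h
    · exact h
    · exfalso
      have : nrmG v = 0 := h.symm
      rw [this, div_zero] at hfar
      linarith
  set V : ℝ := ∑ s, v s ^ 2 with hVdef
  have hVnn : (0:ℝ) ≤ V := Finset.sum_nonneg fun s _ => sq_nonneg _
  have hnv2 : nrmG v ^ 2 = V := Real.sq_sqrt hVnn
  have hVpos : 0 < V := by rw [← hnv2]; positivity
  have hvs₀ : ε ^ 2 * V ≤ v s₀ ^ 2 := by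
    have h1 : ε * nrmG v ≤ |v s₀| := (le_div_iff₀ hnv).mp hfar
    have h2 : (ε * nrmG v) ^ 2 ≤ |v s₀| ^ 2 := by
      have := mul_self_le_mul_self (by positivity) h1
      nlinarith
    rw [sq_abs] at h2
    calc ε ^ 2 * V = (ε * nrmG v) ^ 2 := by rw [mul_pow, hnv2]
      _ ≤ v s₀ ^ 2 := h2
  set W : ℝ := ∑ s, w s ^ 2 with hWdef
  set S : ℝ := ∑ s ∈ Finset.univ.erase s₀, w s ^ 2 with hSdef
  have hWS : W = w s₀ ^ 2 + S :=
    (Finset.add_sum_erase Finset.univ (fun s => w s ^ 2) (Finset.mem_univ s₀)).symm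
  have hSnn : (0:ℝ) ≤ S := Finset.sum_nonneg fun s _ => sq_nonneg _
  have hws₀ : w s₀ ^ 2 = P ^ 2 * v s₀ ^ 2 := by rw [hw]; ring
  have hwpos : 0 < w s₀ ^ 2 := by
    rw [hws₀]
    have hv0 : v s₀ ≠ 0 := by
      intro h
      rw [h, abs_zero, zero_div] at hfar
      linarith
    positivity
  have hWpos : 0 < W := by rw [hWS]; linarith
  -- key estimate
  have hS1 : S ≤ (ε ^ 2 * P) ^ 2 * V := by
    calc S ≤ ∑ s ∈ Finset.univ.erase s₀, (ε ^ 2 * P) ^ 2 * v s ^ 2 := by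
          apply Finset.sum_le_sum
          intro s hs
          have hsne : s.1 ≠ s₀.1 := fun h => (Finset.ne_of_mem_erase hs) (Subtype.ext h)
          have hple : ∏ i ∈ s.1, a i ≤ ε ^ 2 * P :=
            prod_le_eps hk1 hkn a ha_pos ha_mono ε hε0 hgap s₀.1 hs₀ s₀.2 s.1 s.2 hsne
          have hpn : (0:ℝ) ≤ ∏ i ∈ s.1, a i := Finset.prod_nonneg fun i _ => (ha_pos i).le
          have : (∏ i ∈ s.1, a i) ^ 2 ≤ (ε ^ 2 * P) ^ 2 := pow_le_pow_left₀ hpn hple 2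
          calc w s ^ 2 = (∏ i ∈ s.1, a i) ^ 2 * v s ^ 2 := by rw [hw]; ring
            _ ≤ (ε ^ 2 * P) ^ 2 * v s ^ 2 :=
                mul_le_mul_of_nonneg_right this (sq_nonneg _)
      _ = (ε ^ 2 * P) ^ 2 * ∑ s ∈ Finset.univ.erase s₀, v s ^ 2 := by
          rw [Finset.mul_sum]
      _ ≤ (ε ^ 2 * P) ^ 2 * V := by
          apply mul_le_mul_of_nonneg_left _ (sq_nonneg _)
          exact Finset.sum_le_sum_of_subset_of_nonneg (Finset.erase_subset _ _)
            fun s _ _ => sq_nonneg _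
  have hS2 : (ε ^ 2 * P) ^ 2 * V ≤ ε ^ 2 * w s₀ ^ 2 := by
    rw [hws₀]
    have := mul_le_mul_of_nonneg_left hvs₀ (show (0:ℝ) ≤ ε ^ 2 * P ^ 2 by positivity)
    nlinarith
  have hSW : S ≤ ε ^ 2 * W := by
    have hεS : 0 ≤ ε ^ 2 * S := mul_nonneg (sq_nonneg ε) hSnn
    rw [hWS]
    nlinarith
  -- compute pdG
  have hinner : innerpG w e = w s₀ := by
    simp [innerpG, he, mul_ite, mul_one, mul_zero, Finset.sum_ite_eq']
  have hne2 : nrmG e ^ 2 = 1 := by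
    have : ∑ s, e s ^ 2 = 1 := by
      simp [he, apply_ite (· ^ (2:ℕ)), Finset.sum_ite_eq']
    rw [nrmG, Real.sq_sqrt (by rw [this]; norm_num), this]
  have hnw2 : nrmG w ^ 2 = W := Real.sq_sqrt (Finset.sum_nonneg fun s _ => sq_nonneg _)
  have hnwpos : 0 < nrmG w := by
    have : 0 ≤ nrmG w := Real.sqrt_nonneg _
    rcases this.lt_or_eq with h | h
    · exact h
    · exfalso; rw [← h] at hnw2; simp at hnw2; linarith
  have hnepos : nrmG e = 1 := by
    have h := hne2
    have hnn : 0 ≤ nrmG e := Real.sqrt_nonneg _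
    nlinarith
  rw [pdG, hinner, hne2, hnw2, hnepos, mul_one, mul_one]
  have hsub : W - w s₀ ^ 2 = S := by rw [hWS]; ring
  rw [hsub]
  rw [div_le_iff₀ hnwpos]
  have h1 : Real.sqrt S ≤ Real.sqrt (ε ^ 2 * W) := Real.sqrt_le_sqrt hSW
  have h2 : Real.sqrt (ε ^ 2 * W) = ε * nrmG w := by
    rw [Real.sqrt_mul (sq_nonneg ε), Real.sqrt_sq hε0.le]
    have : nrmG w = Real.sqrt W := by unfold nrmG; rw [hWdef]
    rw [this]
  linarith [h1, h2 ▸ h1]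
end

section
/- Fix a real number T > 0. The number of matrices γ ∈ SL_2(ℤ) with ‖γ‖ ≤ X and |tr(γ)| < T is O_ε(T · X^{1+ε}) for every ε > 0; consequently, since |{γ ∈ SL_2(ℤ) : ‖γ‖ ≤ X}| ≫ X², the proportion of elements of norm at most X with |trace| ≤ T tends to 0 as X → ∞. -/
open Filter

/-- Spectral norm `‖γ‖ = √λ_max(γᵗγ)` of an integral matrix, via the operator norm
of its action on Euclidean space. -/
noncomputable def snorm (γ : Matrix.SpecialLinearGroup (Fin 2) ℤ) : ℝ :=
  ‖Matrix.toEuclideanCLM (𝕜 := ℝ) ((γ : Matrix (Fin 2) (Fin 2) ℤ).map (Int.cast : ℤ → ℝ))‖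

lemma snorm_one : snorm 1 = 1 := by
  unfold snorm
  have : ((1 : Matrix.SpecialLinearGroup (Fin 2) ℤ) : Matrix (Fin 2) (Fin 2) ℤ).map
      (Int.cast : ℤ → ℝ) = 1 := by
    simp [Matrix.SpecialLinearGroup.coe_one, Matrix.map_one]
  rw [this, map_one, norm_one]

lemma euclid_coord_le_norm (v : EuclideanSpace ℝ (Fin 2)) (i : Fin 2) : |v i| ≤ ‖v‖ := by
  rw [EuclideanSpace.norm_eq]
  rw [← Real.sqrt_sq_eq_abs]
  apply Real.sqrt_le_sqrt
  have : ‖v i‖ ^ 2 = v i ^ 2 := by simp [Real.norm_eq_abs, sq_abs]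
  calc v i ^ 2 = ‖v i‖ ^ 2 := this.symm
    _ ≤ ∑ j, ‖v j‖ ^ 2 := Finset.single_le_sum (f := fun j => ‖v j‖^2)
        (fun j _ => by positivity) (Finset.mem_univ i)

lemma toCLM_apply (A : Matrix (Fin 2) (Fin 2) ℝ) (x : EuclideanSpace ℝ (Fin 2)) (i : Fin 2) :
    (Matrix.toEuclideanCLM (𝕜 := ℝ) A x) i = A.mulVec x i := by
  have := Matrix.ofLp_toEuclideanCLM (𝕜 := ℝ) A x
  have h2 := congrFun this i
  simpa [Matrix.toLin'_apply] using h2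

lemma entry_le_snorm (γ : Matrix.SpecialLinearGroup (Fin 2) ℤ) (i j : Fin 2) :
    |((γ.1 i j : ℤ) : ℝ)| ≤ snorm γ := by
  set A : Matrix (Fin 2) (Fin 2) ℝ := (γ : Matrix (Fin 2) (Fin 2) ℤ).map (Int.cast : ℤ → ℝ) with hA
  have hx := (Matrix.toEuclideanCLM (𝕜 := ℝ) A).le_opNorm (EuclideanSpace.single j (1:ℝ))
  rw [EuclideanSpace.norm_single, norm_one, mul_one] at hx
  refine le_trans ?_ hx
  have hcomp : (Matrix.toEuclideanCLM (𝕜 := ℝ) A (EuclideanSpace.single j (1:ℝ))) i = A i j := by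
    rw [toCLM_apply]
    simp [Matrix.mulVec, dotProduct, EuclideanSpace.single_apply,
      Finset.sum_eq_single j, mul_comm]
  have := euclid_coord_le_norm (Matrix.toEuclideanCLM (𝕜 := ℝ) A (EuclideanSpace.single j (1:ℝ))) i
  rw [hcomp] at this
  simpa [hA] using this

-- upper bound from entries
lemma snorm_le_of_entries (γ : Matrix.SpecialLinearGroup (Fin 2) ℤ) (m : ℝ)
    (h : ∀ i j, |((γ.1 i j : ℤ) : ℝ)| ≤ m) : snorm γ ≤ 2 * m := by
  have hm : 0 ≤ m := le_trans (abs_nonneg _) (h 0 0)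
  unfold snorm
  set A : Matrix (Fin 2) (Fin 2) ℝ := (γ : Matrix (Fin 2) (Fin 2) ℤ).map (Int.cast : ℤ → ℝ) with hA
  apply ContinuousLinearMap.opNorm_le_bound _ (by positivity)
  intro x
  have hAij : ∀ i j, |A i j| ≤ m := fun i j => by simpa [hA] using h i j
  have hrow : ∀ i : Fin 2, |A.mulVec x i| ≤ m * (|x 0| + |x 1|) := by
    intro i
    have : A.mulVec x i = A i 0 * x 0 + A i 1 * x 1 := by
      simp [Matrix.mulVec, dotProduct, Fin.sum_univ_two]
    rw [this]
    calc |A i 0 * x 0 + A i 1 * x 1| ≤ |A i 0 * x 0| + |A i 1 * x 1| := abs_add_le _ _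
      _ = |A i 0| * |x 0| + |A i 1| * |x 1| := by rw [abs_mul, abs_mul]
      _ ≤ m * (|x 0| + |x 1|) := by
          have h0 := hAij i 0; have h1 := hAij i 1
          have := abs_nonneg (x 0); have := abs_nonneg (x 1)
          nlinarith
  have hxnorm : |x 0| + |x 1| ≤ Real.sqrt 2 * ‖x‖ := by
    have hn : ‖x‖ ^ 2 = x 0 ^ 2 + x 1 ^ 2 := by
      rw [EuclideanSpace.norm_eq]
      rw [Real.sq_sqrt (by positivity)]
      simp [Fin.sum_univ_two, Real.norm_eq_abs, sq_abs]
    have ha : (0:ℝ) ≤ |x 0| + |x 1| := by positivity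
    have hb : (0:ℝ) ≤ Real.sqrt 2 * ‖x‖ := by positivity
    have hsq : (|x 0| + |x 1|)^2 ≤ (Real.sqrt 2 * ‖x‖)^2 := by
      rw [mul_pow, Real.sq_sqrt (by norm_num : (0:ℝ) ≤ 2), hn]
      nlinarith [sq_nonneg (|x 0| - |x 1|), sq_abs (x 0), sq_abs (x 1)]
    have := Real.sqrt_le_sqrt hsq
    rwa [Real.sqrt_sq ha, Real.sqrt_sq hb] at this
  have hnormfx : ‖Matrix.toEuclideanCLM (𝕜 := ℝ) A x‖ ≤ Real.sqrt 2 * (m * (|x 0| + |x 1|)) := by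
    rw [EuclideanSpace.norm_eq]
    have hcoord : ∀ i : Fin 2, ‖(Matrix.toEuclideanCLM (𝕜 := ℝ) A x) i‖ ^ 2 ≤ (m * (|x 0| + |x 1|))^2 := by
      intro i
      rw [toCLM_apply, Real.norm_eq_abs]
      exact pow_le_pow_left₀ (abs_nonneg _) (hrow i) 2
    calc Real.sqrt (∑ i, ‖(Matrix.toEuclideanCLM (𝕜 := ℝ) A x) i‖ ^ 2)
        ≤ Real.sqrt (2 * (m * (|x 0| + |x 1|))^2) := by
          apply Real.sqrt_le_sqrt
          rw [Fin.sum_univ_two]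
          have h0 := hcoord 0; have h1 := hcoord 1; linarith
      _ = Real.sqrt 2 * (m * (|x 0| + |x 1|)) := by
          rw [Real.sqrt_mul (by norm_num)]
          rw [Real.sqrt_sq (by positivity)]
  calc ‖Matrix.toEuclideanCLM (𝕜 := ℝ) A x‖ ≤ Real.sqrt 2 * (m * (|x 0| + |x 1|)) := hnormfx
    _ ≤ Real.sqrt 2 * (m * (Real.sqrt 2 * ‖x‖)) :=
        mul_le_mul_of_nonneg_left (mul_le_mul_of_nonneg_left hxnorm hm) (Real.sqrt_nonneg 2)
    _ = (Real.sqrt 2 * Real.sqrt 2) * m * ‖x‖ := by ring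
    _ = 2 * m * ‖x‖ := by rw [Real.mul_self_sqrt (by norm_num)]

open Filter Finset

lemma divisor_bound (ε : ℝ) (hε : 0 < ε) :
    ∃ C : ℝ, 1 ≤ C ∧ ∀ n : ℕ, n ≠ 0 → (n.divisors.card : ℝ) ≤ C * (n : ℝ) ^ ε := by
  classical
  set u : ℝ := ε * Real.log 2 with hu
  have hu0 : 0 < u := mul_pos hε (Real.log_pos (by norm_num))
  set A : ℝ := max 1 (8 / u ^ 2) with hA
  have hA1 : 1 ≤ A := le_max_left _ _
  have hA0 : 0 < A := lt_of_lt_of_le one_pos hA1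
  have hA8 : 8 / u ^ 2 ≤ A := le_max_right _ _
  set B : ℕ := ⌈(2:ℝ) ^ (1/ε)⌉₊ + 1 with hB
  have hCB : (1:ℝ) ≤ A ^ B := one_le_pow₀ hA1
  refine ⟨A ^ B, hCB, ?_⟩
  intro n hn
  -- key per-prime inequality
  have key : ∀ p ∈ n.primeFactors,
      ((n.factorization p + 1 : ℕ) : ℝ) ≤
        (if (p:ℝ) ^ ε < 2 then A else 1) * ((p:ℝ) ^ (n.factorization p)) ^ ε := by
    intro p hp
    have hpp : p.Prime := Nat.prime_of_mem_primeFactors hp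
    have hp2 : (2:ℝ) ≤ (p:ℝ) := by exact_mod_cast hpp.two_le
    have hp0 : (0:ℝ) ≤ (p:ℝ) := by positivity
    set k : ℕ := n.factorization p with hk
    have hk1 : 1 ≤ k := (Nat.Prime.factorization_pos_of_dvd hpp hn
      (Nat.dvd_of_mem_primeFactors hp))
    have hrw : ((p:ℝ) ^ k) ^ ε = ((p:ℝ) ^ ε) ^ k := by
      rw [← Real.rpow_natCast (p:ℝ) k, ← Real.rpow_mul hp0, mul_comm,
        Real.rpow_mul hp0, Real.rpow_natCast]
    rw [hrw]
    by_cases hcase : (p:ℝ) ^ ε < 2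
    · rw [if_pos hcase]
      -- small prime case
      have hexp : Real.exp u ≤ (p:ℝ) ^ ε := by
        have h2e : (2:ℝ) ^ ε = Real.exp u := by
          rw [Real.rpow_def_of_pos (by norm_num : (0:ℝ) < 2), hu, mul_comm]
        rw [← h2e]
        exact Real.rpow_le_rpow (by norm_num) hp2 hε.le
      have hek : Real.exp (k * u) ≤ ((p:ℝ) ^ ε) ^ k := by
        rw [Real.exp_nat_mul]
        exact pow_le_pow_left₀ (Real.exp_pos _).le hexp k
      have hlow : (k:ℝ) ^ 2 * u ^ 2 / 4 ≤ Real.exp (k * u) := by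
        have h1 : (k:ℝ) * u / 2 + 1 ≤ Real.exp (k * u / 2) := Real.add_one_le_exp _
        have h2 : Real.exp (k * u / 2) * Real.exp (k * u / 2) = Real.exp (k * u) := by
          rw [← Real.exp_add]; ring_nf
        have hku : 0 ≤ (k:ℝ) * u / 2 := by positivity
        nlinarith [Real.exp_pos ((k:ℝ) * u / 2)]
      have hkk : (1:ℝ) ≤ (k:ℝ) := by exact_mod_cast hk1
      have heq : (8 / u ^ 2) * ((k:ℝ) ^ 2 * u ^ 2 / 4) = 2 * (k:ℝ) ^ 2 := by
        field_simp; ring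
      have hmain : ((k:ℝ)) + 1 ≤ (8 / u ^ 2) * ((k:ℝ) ^ 2 * u ^ 2 / 4) := by
        rw [heq]; nlinarith
      push_cast
      calc (k:ℝ) + 1 ≤ (8 / u ^ 2) * ((k:ℝ) ^ 2 * u ^ 2 / 4) := hmain
        _ ≤ A * Real.exp (k * u) := by
            apply mul_le_mul hA8 hlow (by positivity) hA0.le
        _ ≤ A * ((p:ℝ) ^ ε) ^ k := by
            exact mul_le_mul_of_nonneg_left hek hA0.le
    · rw [if_neg hcase]
      rw [one_mul]
      push_neg at hcase
      have h2k : ((k:ℕ) + 1 : ℝ) ≤ (2:ℝ) ^ k := by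
        have := Nat.lt_two_pow_self (n := k)
        exact_mod_cast Nat.succ_le_of_lt this
      push_cast
      push_cast at h2k
      calc (k:ℝ) + 1 ≤ (2:ℝ) ^ k := h2k
        _ ≤ ((p:ℝ) ^ ε) ^ k := pow_le_pow_left₀ (by norm_num) hcase k
  -- assemble
  have hcard : (n.divisors.card : ℝ) =
      ∏ p ∈ n.primeFactors, ((n.factorization p + 1 : ℕ) : ℝ) := by
    rw [Nat.card_divisors hn]; push_cast; rfl
  have hnpow : ((n:ℝ)) ^ ε = ∏ p ∈ n.primeFactors, ((p:ℝ) ^ (n.factorization p)) ^ ε := by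
    have hn' : (n:ℝ) = ∏ p ∈ n.primeFactors, (p:ℝ) ^ (n.factorization p) := by
      conv_lhs => rw [← Nat.factorization_prod_pow_eq_self hn]
      rw [Finsupp.prod, Nat.support_factorization]
      push_cast; rfl
    rw [Real.finset_prod_rpow _ _ (fun p _ => by positivity) ε, ← hn']
  rw [hcard, hnpow]
  have hstep : ∏ p ∈ n.primeFactors, ((n.factorization p + 1 : ℕ) : ℝ) ≤
      ∏ p ∈ n.primeFactors,
        ((if (p:ℝ) ^ ε < 2 then A else 1) * ((p:ℝ) ^ (n.factorization p)) ^ ε) := by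
    apply Finset.prod_le_prod (fun p _ => by positivity) key
  refine hstep.trans ?_
  rw [Finset.prod_mul_distrib]
  have hsub : n.primeFactors.filter (fun p : ℕ => (p:ℝ) ^ ε < 2) ⊆ Finset.range B := by
    intro p hp
    rw [Finset.mem_filter] at hp
    rw [Finset.mem_range]
    have hp0 : (0:ℝ) ≤ (p:ℝ) := Nat.cast_nonneg p
    have h1 : (p:ℝ) < (2:ℝ) ^ (1/ε) := by
      have h := Real.rpow_lt_rpow (Real.rpow_nonneg hp0 ε) hp.2
        (by positivity : (0:ℝ) < 1/ε)
      rw [← Real.rpow_mul hp0, mul_one_div_cancel hε.ne', Real.rpow_one] at h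
      exact h
    have h2 : (p:ℝ) < ((⌈(2:ℝ)^(1/ε)⌉₊ + 1 : ℕ) : ℝ) := by
      push_cast
      have := Nat.le_ceil ((2:ℝ)^(1/ε))
      linarith
    exact_mod_cast h2
  have hprod_eq : ∏ p ∈ n.primeFactors, (if (p:ℝ)^ε < 2 then A else 1) =
      A ^ (n.primeFactors.filter (fun p : ℕ => (p:ℝ)^ε < 2)).card := by
    rw [Finset.prod_ite, Finset.prod_const, Finset.prod_const, one_pow, mul_one]
  have hw : ∏ p ∈ n.primeFactors, (if (p:ℝ) ^ ε < 2 then A else 1) ≤ A ^ B := by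
    rw [hprod_eq]
    apply pow_le_pow_right₀ hA1
    calc (n.primeFactors.filter (fun p : ℕ => (p:ℝ)^ε < 2)).card
        ≤ (Finset.range B).card := Finset.card_le_card hsub
      _ = B := Finset.card_range B
  exact mul_le_mul_of_nonneg_right hw (Finset.prod_nonneg fun p _ => by positivity)

open Finset

lemma sum_sq_inv (N : ℕ) (hN : 2 ≤ N) :
    ∑ g ∈ Finset.Icc 2 N, (1:ℝ)/(g:ℝ)^2 ≤ 3/4 - 1/(N:ℝ) := by
  induction N, hN using Nat.le_induction with
  | base => norm_num
  | succ N hN ih =>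
    rw [Finset.sum_Icc_succ_top (by omega : 2 ≤ N + 1)]
    have hN0 : (0:ℝ) < N := by positivity
    have hN1 : (2:ℝ) ≤ N := by exact_mod_cast hN
    have key : (1:ℝ)/((N:ℝ)+1)^2 ≤ 1/(N:ℝ) - 1/((N:ℝ)+1) := by
      rw [div_sub_div _ _ (ne_of_gt hN0) (by positivity)]
      rw [div_le_div_iff₀ (by positivity) (by positivity)]
      ring_nf
      nlinarith
    push_cast
    linarith

def goodN (N : ℕ) : Finset (ℕ × ℕ) :=
  (Finset.Icc 1 N ×ˢ Finset.Icc 1 N).filter (fun p => Nat.gcd p.1 p.2 = 1)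

lemma good_card (N : ℕ) (hN : 2 ≤ N) : ((N:ℝ))^2/4 ≤ ((goodN N).card : ℝ) := by
  classical
  set s : Finset (ℕ × ℕ) := Finset.Icc 1 N ×ˢ Finset.Icc 1 N with hs
  have hscard : s.card = N^2 := by
    rw [hs, Finset.card_product, Nat.card_Icc]; simp [sq]
  set bad : Finset (ℕ × ℕ) := s.filter (fun p => ¬ Nat.gcd p.1 p.2 = 1) with hbad
  have hsplit : (goodN N).card + bad.card = s.card := by
    rw [goodN, hbad]
    exact Finset.card_filter_add_card_filter_not _
  -- injection from bad into sigma
  have hbadcard : (bad.card : ℝ) ≤ ∑ g ∈ Finset.Icc 2 N, ((N/g : ℕ) : ℝ)^2 := by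
    have hinj : bad.card ≤ ((Finset.Icc 2 N).sigma
        (fun g => Finset.Icc 1 (N/g) ×ˢ Finset.Icc 1 (N/g))).card := by
      apply Finset.card_le_card_of_injOn
        (fun p => ⟨Nat.gcd p.1 p.2, (p.1 / Nat.gcd p.1 p.2, p.2 / Nat.gcd p.1 p.2)⟩)
      · intro p hp
        rw [Finset.mem_coe, Finset.mem_filter, hs, Finset.mem_product, Finset.mem_Icc, Finset.mem_Icc] at hp
        obtain ⟨⟨⟨ha1, haN⟩, ⟨hc1, hcN⟩⟩, hg⟩ := hp
        set g := Nat.gcd p.1 p.2 with hgdef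
        have hg1 : 1 ≤ g := Nat.gcd_pos_of_pos_left _ (by omega)
        have hg2 : 2 ≤ g := by omega
        have hgdvd1 : g ∣ p.1 := Nat.gcd_dvd_left _ _
        have hgdvd2 : g ∣ p.2 := Nat.gcd_dvd_right _ _
        have hgN : g ≤ N := le_trans (Nat.le_of_dvd (by omega) hgdvd1) haN
        rw [Finset.mem_coe, Finset.mem_sigma, Finset.mem_Icc, Finset.mem_product, Finset.mem_Icc, Finset.mem_Icc]
        refine ⟨⟨hg2, hgN⟩, ⟨⟨?_, ?_⟩, ⟨?_, ?_⟩⟩⟩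
        · exact (Nat.one_le_div_iff (by omega)).2 (Nat.le_of_dvd (by omega) hgdvd1)
        · exact Nat.div_le_div_right haN
        · exact (Nat.one_le_div_iff (by omega)).2 (Nat.le_of_dvd (by omega) hgdvd2)
        · exact Nat.div_le_div_right hcN
      · intro p hp q hq heq
        simp only [Sigma.mk.inj_iff, Prod.mk.injEq, heq_eq_eq] at heq
        obtain ⟨hgg, hxx, hyy⟩ := heq
        have h1 : p.1 = q.1 := by
          have e1 : Nat.gcd p.1 p.2 * (p.1 / Nat.gcd p.1 p.2) = p.1 :=
            Nat.mul_div_cancel' (Nat.gcd_dvd_left _ _)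
          have e2 : Nat.gcd q.1 q.2 * (q.1 / Nat.gcd q.1 q.2) = q.1 :=
            Nat.mul_div_cancel' (Nat.gcd_dvd_left _ _)
          rw [← e1, ← e2, hxx, hgg]
        have h2 : p.2 = q.2 := by
          have e1 : Nat.gcd p.1 p.2 * (p.2 / Nat.gcd p.1 p.2) = p.2 :=
            Nat.mul_div_cancel' (Nat.gcd_dvd_right _ _)
          have e2 : Nat.gcd q.1 q.2 * (q.2 / Nat.gcd q.1 q.2) = q.2 :=
            Nat.mul_div_cancel' (Nat.gcd_dvd_right _ _)
          rw [← e1, ← e2, hyy, hgg]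
        exact Prod.ext h1 h2
    calc (bad.card : ℝ) ≤ (((Finset.Icc 2 N).sigma
          (fun g => Finset.Icc 1 (N/g) ×ˢ Finset.Icc 1 (N/g))).card : ℝ) := by
          exact_mod_cast hinj
      _ = ∑ g ∈ Finset.Icc 2 N, ((N/g : ℕ) : ℝ)^2 := by
          rw [Finset.card_sigma]
          push_cast
          apply Finset.sum_congr rfl
          intro g _
          rw [Finset.card_product, Nat.card_Icc]
          push_cast
          simp [sq]
    done
  have hsum : ∑ g ∈ Finset.Icc 2 N, ((N/g : ℕ) : ℝ)^2 ≤ 3/4 * (N:ℝ)^2 := by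
    have h1 : ∀ g ∈ Finset.Icc 2 N, ((N/g : ℕ) : ℝ)^2 ≤ (N:ℝ)^2 * (1/(g:ℝ)^2) := by
      intro g hg
      rw [Finset.mem_Icc] at hg
      have hgnat : 0 < g := by omega
      have hg0 : (0:ℝ) < (g:ℝ) := by exact_mod_cast hgnat
      have := Nat.cast_div_le (α := ℝ) (m := N) (n := g)
      have h0 : (0:ℝ) ≤ ((N/g : ℕ) : ℝ) := Nat.cast_nonneg _
      calc ((N/g : ℕ) : ℝ)^2 ≤ ((N:ℝ)/(g:ℝ))^2 := by
            apply pow_le_pow_left₀ h0 this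
        _ = (N:ℝ)^2 * (1/(g:ℝ)^2) := by field_simp
    calc ∑ g ∈ Finset.Icc 2 N, ((N/g : ℕ) : ℝ)^2
        ≤ ∑ g ∈ Finset.Icc 2 N, (N:ℝ)^2 * (1/(g:ℝ)^2) := Finset.sum_le_sum h1
      _ = (N:ℝ)^2 * ∑ g ∈ Finset.Icc 2 N, (1:ℝ)/(g:ℝ)^2 := by rw [Finset.mul_sum]
      _ ≤ (N:ℝ)^2 * (3/4 - 1/(N:ℝ)) := by
          apply mul_le_mul_of_nonneg_left (sum_sq_inv N hN) (by positivity)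
      _ ≤ 3/4 * (N:ℝ)^2 := by
          have hN0 : (0:ℝ) < N := by positivity
          have : (N:ℝ)^2 * (1/(N:ℝ)) ≥ 0 := by positivity
          nlinarith
  have hcards : ((goodN N).card : ℝ) = (N:ℝ)^2 - (bad.card : ℝ) := by
    have : ((goodN N).card : ℝ) + (bad.card : ℝ) = ((N^2 : ℕ) : ℝ) := by
      rw [← hscard]; exact_mod_cast congrArg (Nat.cast (R := ℝ)) hsplit
    push_cast at this
    linarith
  rw [hcards]
  linarith

lemma exists_completion (a c : ℤ) (ha : 1 ≤ a) (hc : 1 ≤ c) (h : IsCoprime a c) :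
    ∃ b d : ℤ, a * d - b * c = 1 ∧ 0 ≤ d ∧ d < c ∧ -1 ≤ b ∧ b < a := by
  obtain ⟨u, v, huv⟩ := h
  set d := u % c with hd
  have hc0 : 0 < c := hc
  have hd0 : 0 ≤ d := Int.emod_nonneg u (by omega)
  have hdc : d < c := Int.emod_lt_of_pos u hc0
  have hdvd : c ∣ a * d - 1 := by
    refine ⟨-v - a * (u / c), ?_⟩
    rw [hd, Int.emod_def]
    linear_combination huv
  set b := (a * d - 1) / c with hb
  have hbc : b * c = a * d - 1 := by
    rw [hb, Int.ediv_mul_cancel hdvd]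
  refine ⟨b, d, by linarith, hd0, hdc, ?_, ?_⟩
  · -- -1 ≤ b
    have h1 : (-1) * c ≤ b * c := by nlinarith
    exact le_of_mul_le_mul_right h1 hc0
  · -- b < a
    have h1 : b * c < a * c := by nlinarith
    exact lt_of_mul_lt_mul_right h1 (by omega)

lemma sign_abs_eq (x y : ℤ) (h1 : decide (0 ≤ x) = decide (0 ≤ y)) (h2 : x.natAbs = y.natAbs) :
    x = y := by
  have := decide_eq_decide.mp h1
  omega

lemma fiber_bound_ne (N : ℤ) (hN : N ≠ 0) (x : ℤ × ℤ) (s : Finset (ℤ × ℤ × ℤ × ℤ))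
    (hs : ∀ q ∈ s, q.1 = x.1 ∧ q.2.1 = x.2 ∧ q.2.2.1 * q.2.2.2 = N) :
    (s.card : ℝ) ≤ 2 * (N.natAbs.divisors.card : ℝ) := by
  classical
  have hcard : s.card ≤ ((Finset.univ : Finset Bool) ×ˢ N.natAbs.divisors).card := by
    apply Finset.card_le_card_of_injOn
      (fun q => (decide (0 ≤ q.2.2.1), q.2.2.1.natAbs))
    · intro q hq
      obtain ⟨-, -, hprod⟩ := hs q hq
      rw [Finset.mem_coe, Finset.mem_product]
      refine ⟨Finset.mem_univ _, ?_⟩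
      rw [Nat.mem_divisors]
      refine ⟨Int.natAbs_dvd_natAbs.2 ⟨q.2.2.2, hprod.symm⟩, Int.natAbs_ne_zero.2 hN⟩
    · rintro ⟨t, a, b, c⟩ hq ⟨t', a', b', c'⟩ hq' heq
      simp only [Prod.mk.injEq] at heq
      obtain ⟨h1, h2, h3⟩ := hs _ hq
      obtain ⟨h1', h2', h3'⟩ := hs _ hq'
      simp only at h1 h2 h3 h1' h2' h3'
      have hb : b = b' := sign_abs_eq _ _ heq.1 heq.2
      have hbne : b ≠ 0 := by rintro rfl; simp at h3; exact hN h3.symm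
      have hc : c = c' := by
        have : b * c = b * c' := by rw [h3, hb, h3']
        exact mul_left_cancel₀ hbne this
      simp [h1, h1', hb, hc, h2, h2']
  calc (s.card : ℝ) ≤ (((Finset.univ : Finset Bool) ×ˢ N.natAbs.divisors).card : ℝ) := by
        exact_mod_cast hcard
    _ = 2 * (N.natAbs.divisors.card : ℝ) := by
        rw [Finset.card_product]
        push_cast [Finset.card_univ, Fintype.card_bool]
        ring

lemma fiber_bound_zero (M : ℤ) (x : ℤ × ℤ) (s : Finset (ℤ × ℤ × ℤ × ℤ))
    (hs : ∀ q ∈ s, q.1 = x.1 ∧ q.2.1 = x.2 ∧ q.2.2.1 * q.2.2.2 = 0 ∧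
      q.2.2.1 ∈ Finset.Icc (-M) M ∧ q.2.2.2 ∈ Finset.Icc (-M) M) :
    (s.card : ℝ) ≤ 2 * ((Finset.Icc (-M) M).card : ℝ) := by
  classical
  have hcard : s.card ≤ ((Finset.univ : Finset Bool) ×ˢ Finset.Icc (-M) M).card := by
    apply Finset.card_le_card_of_injOn
      (fun q => (decide (q.2.2.1 = 0), if q.2.2.1 = 0 then q.2.2.2 else q.2.2.1))
    · intro q hq
      obtain ⟨-, -, -, hb, hc⟩ := hs q hq
      rw [Finset.mem_coe, Finset.mem_product]
      refine ⟨Finset.mem_univ _, ?_⟩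
      by_cases h : q.2.2.1 = 0 <;> simp [h, hb, hc]
    · rintro ⟨t, a, b, c⟩ hq ⟨t', a', b', c'⟩ hq' heq
      simp only [Prod.mk.injEq] at heq
      obtain ⟨h1, h2, h3, -, -⟩ := hs _ hq
      obtain ⟨h1', h2', h3', -, -⟩ := hs _ hq'
      simp only at h1 h2 h3 h1' h2' h3'
      have hflag := decide_eq_decide.mp heq.1
      by_cases hb0 : b = 0
      · have hb0' : b' = 0 := hflag.mp hb0
        rw [if_pos hb0, if_pos hb0'] at heq
        simp [h1, h1', h2, h2', hb0, hb0', heq.2]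
      · have hb0' : b' ≠ 0 := fun h => hb0 (hflag.mpr h)
        rw [if_neg hb0, if_neg hb0'] at heq
        have hc0 : c = 0 := by
          rcases mul_eq_zero.mp h3 with h | h
          · exact absurd h hb0
          · exact h
        have hc0' : c' = 0 := by
          rcases mul_eq_zero.mp h3' with h | h
          · exact absurd h hb0'
          · exact h
        simp [h1, h1', h2, h2', hc0, hc0', heq.2]
  calc (s.card : ℝ) ≤ (((Finset.univ : Finset Bool) ×ˢ Finset.Icc (-M) M).card : ℝ) := by
        exact_mod_cast hcard
    _ = 2 * ((Finset.Icc (-M) M).card : ℝ) := by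
        rw [Finset.card_product]
        push_cast [Finset.card_univ, Fintype.card_bool]
        ring

-- finiteness of sets of SL2 with bounded entries
lemma finite_of_entries_bounded (S : Set (Matrix.SpecialLinearGroup (Fin 2) ℤ)) (K : ℤ)
    (h : ∀ γ ∈ S, ∀ i j, |γ.1 i j| ≤ K) : S.Finite := by
  have hinj : Function.Injective
      (fun γ : Matrix.SpecialLinearGroup (Fin 2) ℤ => (γ.1 0 0, γ.1 0 1, γ.1 1 0, γ.1 1 1)) := by
    intro γ δ hgd
    simp only [Prod.mk.injEq] at hgd
    ext i j
    fin_cases i <;> fin_cases j <;> simp [hgd.1, hgd.2.1, hgd.2.2.1, hgd.2.2.2]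
  have hsub : S ⊆ (fun γ : Matrix.SpecialLinearGroup (Fin 2) ℤ =>
      (γ.1 0 0, γ.1 0 1, γ.1 1 0, γ.1 1 1)) ⁻¹'
      (Set.Icc (-K) K ×ˢ Set.Icc (-K) K ×ˢ Set.Icc (-K) K ×ˢ Set.Icc (-K) K) := by
    intro γ hγ
    have h1 := h γ hγ
    simp only [Set.mem_preimage, Set.mem_prod, Set.mem_Icc]
    exact ⟨abs_le.1 (h1 0 0), abs_le.1 (h1 0 1), abs_le.1 (h1 1 0), abs_le.1 (h1 1 1)⟩
  exact Set.Finite.subset (Set.Finite.preimage hinj.injOn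
    (((Set.finite_Icc _ _).prod ((Set.finite_Icc _ _).prod
      ((Set.finite_Icc _ _).prod (Set.finite_Icc _ _)))))) hsub

lemma ball_finite (X : ℝ) : {γ : Matrix.SpecialLinearGroup (Fin 2) ℤ | snorm γ ≤ X}.Finite := by
  apply finite_of_entries_bounded _ ⌈X⌉
  intro γ hγ i j
  have h := (entry_le_snorm γ i j).trans hγ
  rw [← Int.cast_abs] at h
  exact_mod_cast h.trans (Int.le_ceil X)

lemma lower_bound (X : ℝ) (hX : 1 ≤ X) :
    (1/64) * X^2 ≤ (({γ : Matrix.SpecialLinearGroup (Fin 2) ℤ | snorm γ ≤ X}).ncard : ℝ) := by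
  classical
  have hfin := ball_finite X
  have hX0 : (0:ℝ) < X := by linarith
  by_cases hX4 : X < 4
  · have h1 : (1 : Matrix.SpecialLinearGroup (Fin 2) ℤ) ∈ {γ | snorm γ ≤ X} := by
      rw [Set.mem_setOf_eq, snorm_one]; linarith
    have h2 : 0 < ({γ : Matrix.SpecialLinearGroup (Fin 2) ℤ | snorm γ ≤ X}).ncard := by
      rw [Set.ncard_pos hfin]; exact ⟨1, h1⟩
    have h3 : (1:ℝ) ≤ ({γ : Matrix.SpecialLinearGroup (Fin 2) ℤ | snorm γ ≤ X}).ncard := by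
      exact_mod_cast h2
    nlinarith
  · push_neg at hX4
    set N : ℕ := ⌊X/2⌋₊ with hN
    have hN2 : 2 ≤ N := Nat.le_floor (by push_cast; linarith)
    have hN1R : (1:ℝ) ≤ (N:ℝ) := by
      have : (2:ℕ) ≤ N := hN2
      exact_mod_cast le_trans (by norm_num) this
    have hNle : (N:ℝ) ≤ X/2 := Nat.floor_le (by positivity)
    have hNge : X/4 ≤ (N:ℝ) := by
      have := Nat.lt_floor_add_one (X/2)
      have hX44 : X/4 ≥ 1 := by linarith
      linarith
    have hex : ∀ p ∈ goodN N, ∃ γ : Matrix.SpecialLinearGroup (Fin 2) ℤ,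
        γ.1 0 0 = (p.1 : ℤ) ∧ γ.1 1 0 = (p.2 : ℤ) ∧ snorm γ ≤ X := by
      intro p hp
      rw [goodN, Finset.mem_filter, Finset.mem_product, Finset.mem_Icc, Finset.mem_Icc] at hp
      obtain ⟨⟨⟨ha1, haN⟩, ⟨hc1, hcN⟩⟩, hg⟩ := hp
      have hcop : IsCoprime (p.1 : ℤ) (p.2 : ℤ) := by
        rw [Int.isCoprime_iff_gcd_eq_one, Int.gcd_natCast_natCast]
        exact hg
      obtain ⟨b, d, hdet, hd0, hdc, hbm, hba⟩ := exists_completion (p.1 : ℤ) (p.2 : ℤ)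
        (by exact_mod_cast ha1) (by exact_mod_cast hc1) hcop
      refine ⟨⟨!![(p.1 : ℤ), b; (p.2 : ℤ), d], by
        rw [Matrix.det_fin_two_of]; linarith⟩, by simp, by simp, ?_⟩
      have haR : ((p.1:ℕ):ℝ) ≤ (N:ℝ) := by exact_mod_cast haN
      have haR1 : (1:ℝ) ≤ ((p.1:ℕ):ℝ) := by exact_mod_cast ha1
      have hcR : ((p.2:ℕ):ℝ) ≤ (N:ℝ) := by exact_mod_cast hcN
      have hcR1 : (1:ℝ) ≤ ((p.2:ℕ):ℝ) := by exact_mod_cast hc1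
      have hbR1 : (-1:ℝ) ≤ (b:ℝ) := by exact_mod_cast hbm
      have hbR2 : (b:ℝ) < ((p.1:ℕ):ℝ) := by exact_mod_cast hba
      have hdR1 : (0:ℝ) ≤ (d:ℝ) := by exact_mod_cast hd0
      have hdR2 : (d:ℝ) < ((p.2:ℕ):ℝ) := by exact_mod_cast hdc
      have hsn := snorm_le_of_entries ⟨!![(p.1 : ℤ), b; (p.2 : ℤ), d], by
        rw [Matrix.det_fin_two_of]; linarith⟩ (N:ℝ) ?_
      · calc snorm _ ≤ 2 * (N:ℝ) := hsn
          _ ≤ X := by linarith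
      · intro i j
        have e00 : (!![(p.1 : ℤ), b; (p.2 : ℤ), d]) 0 0 = (p.1 : ℤ) := rfl
        have e01 : (!![(p.1 : ℤ), b; (p.2 : ℤ), d]) 0 1 = b := rfl
        have e10 : (!![(p.1 : ℤ), b; (p.2 : ℤ), d]) 1 0 = (p.2 : ℤ) := rfl
        have e11 : (!![(p.1 : ℤ), b; (p.2 : ℤ), d]) 1 1 = d := rfl
        fin_cases i <;> fin_cases j <;>
          simp only [Fin.zero_eta, Fin.mk_one, e00, e01, e10, e11] <;>
          rw [abs_le] <;> constructor <;> push_cast <;> linarith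
    choose ψ hψ using hex
    set ψ' : ℕ × ℕ → Matrix.SpecialLinearGroup (Fin 2) ℤ :=
      fun p => if h : p ∈ goodN N then ψ p h else 1 with hψ'
    have hcard : (goodN N).card ≤ hfin.toFinset.card := by
      apply Finset.card_le_card_of_injOn ψ'
      · intro p hp
        rw [Finset.mem_coe] at hp
        rw [Finset.mem_coe, Set.Finite.mem_toFinset]
        rw [hψ']
        simp only [dif_pos hp]
        exact (hψ p hp).2.2
      · intro p hp q hq heq
        rw [Finset.mem_coe] at hp hq
        rw [hψ'] at heq
        simp only [dif_pos hp, dif_pos hq] at heq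
        have h1 : ((p.1 : ℤ)) = (q.1 : ℤ) := by
          rw [← (hψ p hp).1, ← (hψ q hq).1, heq]
        have h2 : ((p.2 : ℤ)) = (q.2 : ℤ) := by
          rw [← (hψ p hp).2.1, ← (hψ q hq).2.1, heq]
        exact Prod.ext (by exact_mod_cast h1) (by exact_mod_cast h2)
    have hncard : ({γ : Matrix.SpecialLinearGroup (Fin 2) ℤ | snorm γ ≤ X}).ncard
        = hfin.toFinset.card := by
      rw [Set.ncard_eq_toFinset_card _ hfin]
    calc (1/64) * X^2 ≤ ((N:ℝ))^2/4 := by nlinarith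
      _ ≤ ((goodN N).card : ℝ) := good_card N hN2
      _ ≤ (hfin.toFinset.card : ℝ) := by exact_mod_cast hcard
      _ = _ := by rw [hncard]

set_option maxHeartbeats 1000000 in
lemma upper_bound (T : ℝ) (hT : 0 < T) (ε : ℝ) (hε : 0 < ε) :
    ∃ C : ℝ, 0 < C ∧ ∀ X : ℝ, 1 ≤ X →
      (({γ : Matrix.SpecialLinearGroup (Fin 2) ℤ |
          snorm γ ≤ X ∧ |((Matrix.trace γ.1 : ℤ) : ℝ)| < T}).ncard : ℝ)
        ≤ C * X ^ ((1 : ℝ) + ε) := by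
  classical
  obtain ⟨C₀, hC₀1, hC₀⟩ := divisor_bound (ε/2) (half_pos hε)
  have hC₀0 : 0 < C₀ := lt_of_lt_of_le one_pos hC₀1
  set C : ℝ := 3*(2*T+3) * (2 * C₀ * (T+3) ^ (ε/2)) + 12 with hCdef
  have hCpos : 0 < C := by positivity
  refine ⟨C, hCpos, ?_⟩
  intro X hX
  have hX0 : (0:ℝ) < X := by linarith
  set M : ℤ := ⌊X⌋ with hM
  have hM1 : (1:ℤ) ≤ M := by rw [hM]; exact_mod_cast Int.le_floor.mpr (by exact_mod_cast hX)
  have hMX : (M:ℝ) ≤ X := Int.floor_le X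
  set K : ℤ := ⌈T⌉ with hK
  have hTK : T ≤ (K:ℝ) := Int.le_ceil T
  have hK1 : (K:ℝ) ≤ T + 1 := le_of_lt (Int.ceil_lt_add_one T)
  have hK0 : (0:ℝ) < (K:ℝ) := lt_of_lt_of_le hT hTK
  set S := {γ : Matrix.SpecialLinearGroup (Fin 2) ℤ |
      snorm γ ≤ X ∧ |((Matrix.trace γ.1 : ℤ) : ℝ)| < T} with hS
  have hfin : S.Finite := (ball_finite X).subset (fun γ h => h.1)
  set F : Finset (ℤ×ℤ×ℤ×ℤ) := ((Finset.Icc (-K) K) ×ˢ (Finset.Icc (-M) M) ×ˢ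
      (Finset.Icc (-M) M) ×ˢ (Finset.Icc (-M) M)).filter
      (fun q => q.2.2.1 * q.2.2.2 = q.2.1 * (q.1 - q.2.1) - 1) with hF
  have hentry : ∀ γ ∈ S, ∀ i j, γ.1 i j ∈ Finset.Icc (-M) M := by
    intro γ hγ i j
    have h := (entry_le_snorm γ i j).trans hγ.1
    rw [← Int.cast_abs] at h
    have h2 : |γ.1 i j| ≤ M := by rw [hM]; exact Int.le_floor.mpr h
    rw [Finset.mem_Icc]; exact abs_le.mp h2
  -- Step 1 : inject S into F
  have step1 : (S.ncard : ℝ) ≤ (F.card : ℝ) := by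
    rw [Set.ncard_eq_toFinset_card _ hfin]
    have hle : hfin.toFinset.card ≤ F.card := by
      apply Finset.card_le_card_of_injOn
        (fun γ => (γ.1 0 0 + γ.1 1 1, γ.1 0 0, γ.1 0 1, γ.1 1 0))
      · intro γ hγ
        rw [Finset.mem_coe, Set.Finite.mem_toFinset] at hγ
        have htr : Matrix.trace γ.1 = γ.1 0 0 + γ.1 1 1 := Matrix.trace_fin_two γ.1
        have hdet : γ.1 0 0 * γ.1 1 1 - γ.1 0 1 * γ.1 1 0 = 1 := by
          rw [← Matrix.det_fin_two]; exact γ.2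
        rw [Finset.mem_coe, hF, Finset.mem_filter]
        constructor
        · rw [Finset.mem_product]
          refine ⟨?_, ?_⟩
          · -- trace range
            have h1 : |((Matrix.trace (γ : Matrix (Fin 2) (Fin 2) ℤ) : ℤ) : ℝ)| < T := hγ.2
            have h1' : ((|Matrix.trace (γ : Matrix (Fin 2) (Fin 2) ℤ)| : ℤ) : ℝ) < T := by
              rw [Int.cast_abs]; exact h1
            have h2 : |Matrix.trace (γ : Matrix (Fin 2) (Fin 2) ℤ)| ≤ K := by
              have h3 := lt_of_lt_of_le h1' hTK
              exact_mod_cast h3.le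
            rw [htr] at h2
            rw [Finset.mem_Icc]
            exact abs_le.mp h2
          · rw [Finset.mem_product]
            refine ⟨hentry γ hγ 0 0, ?_⟩
            rw [Finset.mem_product]
            exact ⟨hentry γ hγ 0 1, hentry γ hγ 1 0⟩
        · simp only
          ring_nf
          linarith [hdet]
      · intro γ hγ δ hδ heq
        simp only [Prod.mk.injEq] at heq
        obtain ⟨h1, h2, h3, h4⟩ := heq
        have h5 : γ.1 1 1 = δ.1 1 1 := by omega
        ext i j
        fin_cases i <;> fin_cases j <;> assumption
    exact_mod_cast hle
  -- Step 2 : bound F.card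
  set tset : Finset (ℤ×ℤ) := (Finset.Icc (-K) K) ×ˢ (Finset.Icc (-M) M) with htset
  have hkey : ∀ q ∈ F, (q.1, q.2.1) ∈ tset := by
    intro q hq
    rw [hF, Finset.mem_filter, Finset.mem_product] at hq
    obtain ⟨⟨h1, h2⟩, -⟩ := hq
    rw [Finset.mem_product] at h2
    rw [htset, Finset.mem_product]
    exact ⟨h1, h2.1⟩
  have hsplitF : F.card = ∑ x ∈ tset, (F.filter (fun q => (q.1, q.2.1) = x)).card :=
    Finset.card_eq_sum_card_fiberwise hkey
  have hIccR : ((Finset.Icc (-M) M).card : ℝ) ≤ 3 * X := by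
    have h1 : (Finset.Icc (-M) M).card = (2*M+1).toNat := by
      rw [Int.card_Icc]; congr 1; ring
    rw [h1]
    have h2 : ((2*M+1).toNat : ℤ) = 2*M+1 := Int.toNat_of_nonneg (by omega)
    have h3 : (((2*M+1).toNat : ℕ) : ℝ) = 2*(M:ℝ)+1 := by
      exact_mod_cast congrArg (Int.cast : ℤ → ℝ) h2
    rw [h3]
    linarith
  have hKpos : (0:ℤ) < K := by rw [hK]; exact Int.ceil_pos.mpr hT
  have hIccKR : ((Finset.Icc (-K) K).card : ℝ) ≤ 2*T + 3 := by
    have h1 : (Finset.Icc (-K) K).card = (2*K+1).toNat := by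
      rw [Int.card_Icc]; congr 1; ring
    rw [h1]
    have h2 : ((2*K+1).toNat : ℤ) = 2*K+1 := Int.toNat_of_nonneg (by omega)
    have h3 : (((2*K+1).toNat : ℕ) : ℝ) = 2*(K:ℝ)+1 := by
      exact_mod_cast congrArg (Int.cast : ℤ → ℝ) h2
    rw [h3]
    linarith
  set D : ℝ := 2 * C₀ * (T+3) ^ (ε/2) * X ^ ε with hD
  have hDpos : 0 < D := by positivity
  have hfib : ∀ x ∈ tset, ((F.filter (fun q => (q.1, q.2.1) = x)).card : ℝ) ≤
      (if x.2 * (x.1 - x.2) - 1 = 0 then 2 * ((Finset.Icc (-M) M).card : ℝ) else D) := by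
    intro x hx
    set N : ℤ := x.2 * (x.1 - x.2) - 1 with hNx
    have hmem : ∀ q ∈ F.filter (fun q => (q.1, q.2.1) = x),
        q.1 = x.1 ∧ q.2.1 = x.2 ∧ q.2.2.1 * q.2.2.2 = N ∧
          q.2.2.1 ∈ Finset.Icc (-M) M ∧ q.2.2.2 ∈ Finset.Icc (-M) M := by
      intro q hq
      rw [Finset.mem_filter] at hq
      obtain ⟨hqF, hqx⟩ := hq
      rw [hF, Finset.mem_filter, Finset.mem_product] at hqF
      obtain ⟨⟨-, hq2⟩, heqn⟩ := hqF
      rw [Finset.mem_product] at hq2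
      obtain ⟨-, hq3⟩ := hq2
      rw [Finset.mem_product] at hq3
      have h1 : q.1 = x.1 := by rw [← hqx]
      have h2 : q.2.1 = x.2 := by rw [← hqx]
      exact ⟨h1, h2, by rw [hNx, ← h1, ← h2]; exact heqn, hq3.1, hq3.2⟩
    by_cases h0 : N = 0
    · rw [if_pos h0]
      apply fiber_bound_zero M x
      intro q hq
      obtain ⟨h1, h2, h3, h4, h5⟩ := hmem q hq
      exact ⟨h1, h2, by rw [h3, h0], h4, h5⟩
    · rw [if_neg h0]
      have hb1 : ((F.filter (fun q => (q.1, q.2.1) = x)).card : ℝ) ≤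
          2 * (N.natAbs.divisors.card : ℝ) :=
        fiber_bound_ne N h0 x _ (fun q hq =>
          ⟨(hmem q hq).1, (hmem q hq).2.1, (hmem q hq).2.2.1⟩)
      refine hb1.trans ?_
      have hdiv := hC₀ N.natAbs (Int.natAbs_ne_zero.mpr h0)
      -- bound |N|
      have hxmem := hx
      rw [htset, Finset.mem_product, Finset.mem_Icc, Finset.mem_Icc] at hxmem
      have hx1R : |(x.1:ℝ)| ≤ T + 1 := by
        have h1 : |x.1| ≤ K := abs_le.mpr hxmem.1
        have h2 : |(x.1:ℝ)| ≤ (K:ℝ) := by exact_mod_cast h1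
        linarith
      have hx2R : |(x.2:ℝ)| ≤ X := by
        have h1 : |x.2| ≤ M := abs_le.mpr hxmem.2
        have h2 : |(x.2:ℝ)| ≤ (M:ℝ) := by exact_mod_cast h1
        linarith
      have hNabs : ((N.natAbs : ℕ) : ℝ) ≤ (T+3) * X^2 := by
        have h1 : ((N.natAbs : ℕ) : ℝ) = |(N:ℝ)| := by
          simp [Nat.cast_natAbs, Int.cast_abs]
        rw [h1, hNx]
        push_cast
        set a : ℝ := (x.2:ℝ) with hadef
        set t : ℝ := (x.1:ℝ) with htdef
        obtain ⟨ha1, ha2⟩ := abs_le.mp hx2R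
        obtain ⟨ht1, ht2⟩ := abs_le.mp hx1R
        have hat : |a * t| ≤ X * (T+1) := by
          rw [abs_mul]
          exact mul_le_mul hx2R hx1R (abs_nonneg _) (by linarith)
        obtain ⟨hat1, hat2⟩ := abs_le.mp hat
        have ha2sq : a^2 ≤ X^2 := by nlinarith [sq_nonneg (X - a), sq_nonneg (X + a)]
        have hX2 : 1 ≤ X^2 := by nlinarith
        have hXX : X ≤ X^2 := by nlinarith
        have h5 : X*(T+1) ≤ X^2*(T+1) := by nlinarith
        have hexpand : a*(t-a) - 1 = a*t - a^2 - 1 := by ring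
        rw [abs_le, hexpand]
        constructor
        · linarith [sq_nonneg a]
        · linarith [sq_nonneg a]
      have hmono : ((N.natAbs : ℕ):ℝ) ^ (ε/2) ≤ ((T+3) * X^2) ^ (ε/2) :=
        Real.rpow_le_rpow (Nat.cast_nonneg _) hNabs (by positivity)
      have hrw : ((T+3) * X^2) ^ (ε/2) = (T+3)^(ε/2) * X ^ ε := by
        rw [Real.mul_rpow (by linarith) (by positivity)]
        congr 1
        rw [← Real.rpow_natCast X 2, ← Real.rpow_mul hX0.le]
        congr 1
        push_cast
        ring
      rw [hrw] at hmono
      calc 2 * (N.natAbs.divisors.card : ℝ) ≤ 2 * (C₀ * ((N.natAbs : ℕ):ℝ) ^ (ε/2)) := by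
            linarith [hdiv]
        _ ≤ 2 * (C₀ * ((T+3)^(ε/2) * X ^ ε)) := by
            have h3 : (0:ℝ) ≤ C₀ := hC₀0.le
            nlinarith [hmono]
        _ = D := by rw [hD]; ring
  have hP : ((tset.filter (fun x => x.2*(x.1-x.2)-1 = 0)).card : ℝ) ≤ 2 := by
    have hsub2 : tset.filter (fun x => x.2*(x.1-x.2)-1 = 0) ⊆
        ({((2:ℤ),(1:ℤ)), ((-2:ℤ),(-1:ℤ))} : Finset (ℤ×ℤ)) := by
      intro x hx
      rw [Finset.mem_filter] at hx
      have h1 : x.2 * (x.1 - x.2) = 1 := by linarith [hx.2]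
      rcases Int.mul_eq_one_iff_eq_one_or_neg_one.mp h1 with ⟨ha, hb⟩ | ⟨ha, hb⟩
      · have : x = ((2:ℤ),(1:ℤ)) := by
          have hx1 : x.1 = 2 := by omega
          exact Prod.ext hx1 ha
        rw [this]; simp
      · have : x = ((-2:ℤ),(-1:ℤ)) := by
          have hx1 : x.1 = -2 := by omega
          exact Prod.ext hx1 ha
        rw [this]; simp
    have := Finset.card_le_card hsub2
    have h2 : ({((2:ℤ),(1:ℤ)), ((-2:ℤ),(-1:ℤ))} : Finset (ℤ×ℤ)).card ≤ 2 := by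
      apply le_trans (Finset.card_insert_le _ _)
      simp
    exact_mod_cast le_trans this h2
  have htsetR : (tset.card : ℝ) ≤ (2*T+3) * (3*X) := by
    rw [htset, Finset.card_product]
    push_cast
    apply mul_le_mul hIccKR hIccR (Nat.cast_nonneg _) (by linarith)
  have hXpow : X ≤ X ^ ((1:ℝ)+ε) := by
    nth_rewrite 1 [← Real.rpow_one X]
    exact Real.rpow_le_rpow_of_exponent_le hX (by linarith)
  have hXmul : X * X ^ ε = X ^ ((1:ℝ)+ε) := by
    rw [Real.rpow_add hX0, Real.rpow_one]
  have hMnn : (0:ℝ) ≤ ((Finset.Icc (-M) M).card : ℝ) := Nat.cast_nonneg _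
  calc (S.ncard : ℝ) ≤ (F.card : ℝ) := step1
    _ = ∑ x ∈ tset, ((F.filter (fun q => (q.1, q.2.1) = x)).card : ℝ) := by
        rw [hsplitF]; push_cast; rfl
    _ ≤ ∑ x ∈ tset, (if x.2 * (x.1 - x.2) - 1 = 0 then
          2 * ((Finset.Icc (-M) M).card : ℝ) else D) := Finset.sum_le_sum hfib
    _ = ((tset.filter (fun x => x.2*(x.1-x.2)-1 = 0)).card : ℝ)
          * (2 * ((Finset.Icc (-M) M).card : ℝ))
        + ((tset.filter (fun x => ¬(x.2*(x.1-x.2)-1 = 0))).card : ℝ) * D := by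
        rw [Finset.sum_ite, Finset.sum_const, Finset.sum_const]
        push_cast [nsmul_eq_mul]
        ring
    _ ≤ 2 * (2 * (3*X)) + ((2*T+3) * (3*X)) * D := by
        apply add_le_add
        · apply mul_le_mul hP ?_ (by positivity) (by norm_num)
          linarith
        · apply mul_le_mul ?_ (le_refl D) hDpos.le ?_
          · refine le_trans ?_ htsetR
            exact_mod_cast Nat.cast_le.mpr (Finset.card_le_card (Finset.filter_subset _ _))
          · positivity
    _ = 12 * X + (3*(2*T+3)) * (2*C₀*(T+3)^(ε/2)) * (X * X^ε) := by rw [hD]; ring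
    _ ≤ 12 * X^((1:ℝ)+ε) + (3*(2*T+3)) * (2*C₀*(T+3)^(ε/2)) * X^((1:ℝ)+ε) := by
        rw [hXmul]
        apply add_le_add _ (le_refl _)
        linarith
    _ = C * X^((1:ℝ)+ε) := by rw [hCdef]; ring

/-- For fixed `T > 0`, the number of `γ ∈ SL₂(ℤ)` with `‖γ‖ ≤ X` and `|tr γ| < T`
is `O_ε(T·X^{1+ε})`; since the ball `B_X` has `≫ X²` elements, the proportion of
elements of norm at most `X` with `|trace| ≤ T` tends to `0` as `X → ∞`. -/
theorem small_trace_sparse (T : ℝ) (hT : 0 < T) :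
    (∀ ε : ℝ, 0 < ε → ∃ C : ℝ, 0 < C ∧ ∀ X : ℝ, 1 ≤ X →
      (({γ : Matrix.SpecialLinearGroup (Fin 2) ℤ |
          snorm γ ≤ X ∧ |((Matrix.trace γ.1 : ℤ) : ℝ)| < T}).ncard : ℝ)
        ≤ C * T * X ^ ((1 : ℝ) + ε)) ∧
    (∃ c : ℝ, 0 < c ∧ ∀ X : ℝ, 1 ≤ X →
      c * X ^ 2 ≤ (({γ : Matrix.SpecialLinearGroup (Fin 2) ℤ | snorm γ ≤ X}).ncard : ℝ)) ∧
    Tendsto (fun X : ℝ =>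
      (({γ : Matrix.SpecialLinearGroup (Fin 2) ℤ |
          snorm γ ≤ X ∧ |((Matrix.trace γ.1 : ℤ) : ℝ)| ≤ T}).ncard : ℝ) /
      (({γ : Matrix.SpecialLinearGroup (Fin 2) ℤ | snorm γ ≤ X}).ncard : ℝ))
      atTop (nhds 0) := by
  refine ⟨?_, ⟨1/64, by norm_num, fun X hX => lower_bound X hX⟩, ?_⟩
  · intro ε hε
    obtain ⟨C, hC, h⟩ := upper_bound T hT ε hε
    refine ⟨C / T, div_pos hC hT, ?_⟩
    intro X hX
    have h2 := h X hX
    have hTne : T ≠ 0 := ne_of_gt hT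
    have h3 : C / T * T * X ^ ((1:ℝ)+ε) = C * X ^ ((1:ℝ)+ε) := by
      field_simp
    rw [h3]
    exact h2
  · obtain ⟨C, hC, hupp⟩ := upper_bound (T+1) (by linarith) (1/2) (by norm_num)
    apply tendsto_of_tendsto_of_tendsto_of_le_of_le' (g := fun _ : ℝ => (0:ℝ))
      (h := fun X : ℝ => 64*C * X ^ (-(1/2:ℝ)))
    · exact tendsto_const_nhds
    · have h1 : Filter.Tendsto (fun X : ℝ => X ^ (-(1/2:ℝ))) atTop (nhds 0) :=
        tendsto_rpow_neg_atTop (by norm_num)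
      have h2 := h1.const_mul (64*C)
      simpa using h2
    · apply Filter.Eventually.of_forall
      intro X
      positivity
    · rw [Filter.eventually_atTop]
      refine ⟨1, ?_⟩
      intro X hX
      have hX0 : (0:ℝ) < X := by linarith
      have hsub : {γ : Matrix.SpecialLinearGroup (Fin 2) ℤ |
          snorm γ ≤ X ∧ |((Matrix.trace γ.1 : ℤ) : ℝ)| ≤ T} ⊆
          {γ : Matrix.SpecialLinearGroup (Fin 2) ℤ |
          snorm γ ≤ X ∧ |((Matrix.trace γ.1 : ℤ) : ℝ)| < T+1} :=
        fun γ hγ => ⟨hγ.1, lt_of_le_of_lt hγ.2 (lt_add_one T)⟩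
      have hfin' : ({γ : Matrix.SpecialLinearGroup (Fin 2) ℤ |
          snorm γ ≤ X ∧ |((Matrix.trace γ.1 : ℤ) : ℝ)| < T+1}).Finite :=
        (ball_finite X).subset (fun γ h => h.1)
      have hnum1 : (({γ : Matrix.SpecialLinearGroup (Fin 2) ℤ |
          snorm γ ≤ X ∧ |((Matrix.trace γ.1 : ℤ) : ℝ)| ≤ T}).ncard : ℝ) ≤
          (({γ : Matrix.SpecialLinearGroup (Fin 2) ℤ |
          snorm γ ≤ X ∧ |((Matrix.trace γ.1 : ℤ) : ℝ)| < T+1}).ncard : ℝ) := by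
        exact_mod_cast Set.ncard_le_ncard hsub hfin'
      have hnum2 := (hupp X hX)
      have hnum : (({γ : Matrix.SpecialLinearGroup (Fin 2) ℤ |
          snorm γ ≤ X ∧ |((Matrix.trace γ.1 : ℤ) : ℝ)| ≤ T}).ncard : ℝ) ≤
          C * X ^ ((1:ℝ) + 1/2) := le_trans hnum1 hnum2
      have hden := lower_bound X hX
      have hdenpos : (0:ℝ) < (1/64) * X^2 := by positivity
      calc (({γ : Matrix.SpecialLinearGroup (Fin 2) ℤ |
              snorm γ ≤ X ∧ |((Matrix.trace γ.1 : ℤ) : ℝ)| ≤ T}).ncard : ℝ) /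
            (({γ : Matrix.SpecialLinearGroup (Fin 2) ℤ | snorm γ ≤ X}).ncard : ℝ)
          ≤ (C * X ^ ((1:ℝ) + 1/2)) / ((1/64) * X^2) := by
            apply div_le_div₀ (by positivity) hnum hdenpos hden
        _ = 64*C * X ^ (-(1/2:ℝ)) := by
            rw [show C * X ^ ((1:ℝ)+1/2) / ((1/64)*X^2) =
              64*C*(X ^ ((1:ℝ)+1/2) / X^2) from by ring]
            rw [← Real.rpow_natCast X 2, ← Real.rpow_sub hX0]
            norm_num
end

section
/- Every free subgroup of infinite rank or any nonabelian free subgroup F ≤ SL_n(ℤ) with n ≥ 3 has infinite index in SL_n(ℤ). Equivalently: for n ≥ 3, no finite-index subgroup of SL_n(ℤ) is free (nonabelian free groups do not have Kazhdan's property (T), while finite-index subgroups of SL_n(ℤ), n ≥ 3, do). -/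
open Matrix Subgroup

section Aux

/-- A transvection as an element of the special linear group. -/
def slTransvection {n : ℕ} (i j : Fin n) (h : i ≠ j) (c : ℤ) :
    Matrix.SpecialLinearGroup (Fin n) ℤ :=
  ⟨Matrix.transvection i j c, Matrix.det_transvection_of_ne i j h c⟩

lemma slTransvection_mul {n : ℕ} (i j : Fin n) (h : i ≠ j) (c d : ℤ) :
    slTransvection i j h c * slTransvection i j h d = slTransvection i j h (c + d) :=
  Subtype.ext (Matrix.transvection_mul_transvection_same i j h c d)

lemma slTransvection_zero {n : ℕ} (i j : Fin n) (h : i ≠ j) :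
    slTransvection i j h 0 = 1 :=
  Subtype.ext (Matrix.transvection_zero i j)

lemma slTransvection_inv {n : ℕ} (i j : Fin n) (h : i ≠ j) (c : ℤ) :
    (slTransvection i j h c)⁻¹ = slTransvection i j h (-c) := by
  apply inv_eq_of_mul_eq_one_right
  rw [slTransvection_mul, add_neg_cancel, slTransvection_zero]

lemma slTransvection_zpow {n : ℕ} (i j : Fin n) (h : i ≠ j) (m : ℤ) :
    (slTransvection i j h 1) ^ m = slTransvection i j h m := by
  induction m using Int.induction_on with
  | zero => rw [zpow_zero, slTransvection_zero]
  | succ k ih =>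
      rw [_root_.zpow_add_one, ih, slTransvection_mul]
  | pred k ih =>
      rw [_root_.zpow_sub_one, ih, slTransvection_inv, slTransvection_mul, sub_eq_add_neg]

lemma slTransvection_comm {n : ℕ} (i₀ i₁ j : Fin n) (h₀ : i₀ ≠ j) (h₁ : i₁ ≠ j)
    (c d : ℤ) :
    slTransvection i₀ j h₀ c * slTransvection i₁ j h₁ d
      = slTransvection i₁ j h₁ d * slTransvection i₀ j h₀ c := by
  apply Subtype.ext
  show Matrix.transvection i₀ j c * Matrix.transvection i₁ j d
      = Matrix.transvection i₁ j d * Matrix.transvection i₀ j c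
  simp only [Matrix.transvection, Matrix.add_mul, Matrix.mul_add, Matrix.one_mul,
    Matrix.mul_one, Matrix.single_mul_single_of_ne _ _ _ _ (Ne.symm h₁),
    Matrix.single_mul_single_of_ne _ _ _ _ (Ne.symm h₀)]
  abel

lemma slTransvection_apply {n : ℕ} (i j : Fin n) (h : i ≠ j) (c : ℤ) :
    (slTransvection i j h c : Matrix (Fin n) (Fin n) ℤ) i j = c := by
  simp [slTransvection, Matrix.transvection, Matrix.add_apply, Matrix.one_apply_ne h]

lemma slTransvection_inj {n : ℕ} (i j : Fin n) (h : i ≠ j) {c d : ℤ}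
    (hcd : slTransvection i j h c = slTransvection i j h d) : c = d := by
  have := congrArg (fun M : Matrix.SpecialLinearGroup (Fin n) ℤ =>
    (M : Matrix (Fin n) (Fin n) ℤ) i j) hcd
  simpa [slTransvection_apply] using this

/-- A free group in which any two elements commute is cyclic. -/
lemma free_comm_cyclic (K : Type*) [Group K] [IsFreeGroup K]
    (hc : ∀ x y : K, x * y = y * x) :
    ∃ c : K, ∀ x : K, ∃ m : ℤ, x = c ^ m := by
  classical
  -- the generating set is a subsingleton
  have hsub : ∀ x y : IsFreeGroup.Generators K, x = y := by
    intro x y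
    by_contra hxy
    set f : IsFreeGroup.Generators K → Equiv.Perm (Fin 3) :=
      fun z => if z = x then Equiv.swap 0 1 else if z = y then Equiv.swap 1 2 else 1 with hf
    have h1 : IsFreeGroup.lift f (IsFreeGroup.of x) = Equiv.swap 0 1 := by
      rw [IsFreeGroup.lift_of, hf]; simp
    have h2 : IsFreeGroup.lift f (IsFreeGroup.of y) = Equiv.swap 1 2 := by
      rw [IsFreeGroup.lift_of, hf]; simp [Ne.symm hxy]
    have hcomm := hc (IsFreeGroup.of x) (IsFreeGroup.of y)
    have : (Equiv.swap 0 1 : Equiv.Perm (Fin 3)) * Equiv.swap 1 2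
        = Equiv.swap 1 2 * Equiv.swap 0 1 := by
      rw [← h1, ← h2, ← _root_.map_mul, ← _root_.map_mul, hcomm]
    exact absurd this (by decide)
  -- the generators generate
  have htop : Subgroup.closure
      (Set.range (IsFreeGroup.of : IsFreeGroup.Generators K → K)) = ⊤ := by
    have hr : Set.range (IsFreeGroup.of : IsFreeGroup.Generators K → K)
        = (IsFreeGroup.mulEquiv K).toMonoidHom '' Set.range FreeGroup.of := by
      rw [← Set.range_comp]; rfl
    rw [hr, ← MonoidHom.map_closure, FreeGroup.closure_range_of]
    exact Subgroup.map_top_of_surjective _ (IsFreeGroup.mulEquiv K).surjective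
  rcases isEmpty_or_nonempty (IsFreeGroup.Generators K) with he | ⟨⟨x0⟩⟩
  · refine ⟨1, fun x => ⟨0, ?_⟩⟩
    rw [Set.range_eq_empty, Subgroup.closure_empty] at htop
    have hx : x ∈ (⊥ : Subgroup K) := htop.symm ▸ Subgroup.mem_top x
    simpa using hx
  · refine ⟨IsFreeGroup.of x0, fun x => ?_⟩
    have hr : Set.range (IsFreeGroup.of : IsFreeGroup.Generators K → K)
        = {IsFreeGroup.of x0} := by
      apply Set.eq_singleton_iff_unique_mem.2
      exact ⟨⟨x0, rfl⟩, by rintro _ ⟨z, rfl⟩; rw [hsub z x0]⟩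
    rw [hr, ← Subgroup.zpowers_eq_closure] at htop
    have hx : x ∈ Subgroup.zpowers (IsFreeGroup.of x0) := htop.symm ▸ Subgroup.mem_top x
    rcases Subgroup.mem_zpowers_iff.mp hx with ⟨m, hm⟩
    exact ⟨m, hm.symm⟩

end Aux

/-- For `n ≥ 3`, every nonabelian free subgroup of `SL_n(ℤ)` has infinite index
(equivalently, no finite-index subgroup of `SL_n(ℤ)`, `n ≥ 3`, is nonabelian free):
`SL_n(ℤ)` has Kazhdan's property (T) while nonabelian free groups do not.
(`H.index = 0` encodes infinite index.) -/
theorem free_subgroup_infinite_index (n : ℕ) (hn : 3 ≤ n)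
    (H : Subgroup (Matrix.SpecialLinearGroup (Fin n) ℤ))
    (hfree : IsFreeGroup H) (hnonab : ¬ ∀ a b : H, a * b = b * a) :
    H.index = 0 := by
  by_contra hidx
  haveI := hfree
  haveI : H.FiniteIndex := ⟨hidx⟩
  set k := H.normalCore.index with hkdef
  have hk0 : k ≠ 0 := Subgroup.FiniteIndex.index_ne_zero
  -- indices
  have h0 : (0 : ℕ) < n := by omega
  have h1 : (1 : ℕ) < n := by omega
  have h2 : (2 : ℕ) < n := by omega
  set i₀ : Fin n := ⟨0, h0⟩
  set i₁ : Fin n := ⟨1, h1⟩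
  set i₂ : Fin n := ⟨2, h2⟩
  have h02 : i₀ ≠ i₂ := Fin.ne_of_val_ne (by norm_num)
  have h12 : i₁ ≠ i₂ := Fin.ne_of_val_ne (by norm_num)
  have h01 : i₀ ≠ i₁ := Fin.ne_of_val_ne (by norm_num)
  set A := slTransvection i₀ i₂ h02 1 with hA
  set B := slTransvection i₁ i₂ h12 1 with hB
  have hAk : A ^ (k : ℤ) ∈ H := by
    rw [zpow_natCast]
    exact H.normalCore_le (H.normalCore.pow_index_mem A)
  have hBk : B ^ (k : ℤ) ∈ H := by
    rw [zpow_natCast]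
    exact H.normalCore_le (H.normalCore.pow_index_mem B)
  set a : H := ⟨A ^ (k : ℤ), hAk⟩ with ha
  set b : H := ⟨B ^ (k : ℤ), hBk⟩ with hb
  have hABcomm : A ^ (k : ℤ) * B ^ (k : ℤ) = B ^ (k : ℤ) * A ^ (k : ℤ) := by
    rw [hA, hB, slTransvection_zpow, slTransvection_zpow, slTransvection_comm]
  have hab : a * b = b * a := Subtype.ext hABcomm
  -- the subgroup generated by a and b
  set K := Subgroup.closure ({a, b} : Set H) with hK
  have haK : a ∈ K := Subgroup.subset_closure (by simp)
  have hbK : b ∈ K := Subgroup.subset_closure (by simp)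
  -- K is commutative
  have hcent : ∀ x ∈ K, a * x = x * a ∧ b * x = x * b := by
    intro x hx
    have hle : K ≤ Subgroup.centralizer ({a, b} : Set H) := by
      rw [hK]
      refine (Subgroup.closure_le _).2 ?_
      intro z hz
      rw [SetLike.mem_coe, Subgroup.mem_centralizer_iff]
      intro w hw
      simp only [Set.mem_insert_iff, Set.mem_singleton_iff] at hz hw
      rcases hz with hz | hz <;> rcases hw with hw | hw <;> rw [hz, hw]
      · exact hab.symm
      · exact hab
    have h := Subgroup.mem_centralizer_iff.1 (hle hx)
    exact ⟨h a (by simp), h b (by simp)⟩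
  have hcomm : ∀ x y : K, x * y = y * x := by
    intro x y
    have hle : K ≤ Subgroup.centralizer ({(x : H)} : Set H) := by
      refine le_trans (le_of_eq hK) ((Subgroup.closure_le _).2 ?_)
      intro z hz
      rw [SetLike.mem_coe, Subgroup.mem_centralizer_iff]
      intro w hw
      simp only [Set.mem_insert_iff, Set.mem_singleton_iff] at hz hw
      rw [hw]
      rcases hz with hz | hz <;> rw [hz]
      · exact ((hcent x.1 x.2).1).symm
      · exact ((hcent x.1 x.2).2).symm
    exact Subtype.ext (Subgroup.mem_centralizer_iff.1 (hle y.2) x rfl)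
  -- K is free (Nielsen–Schreier) and commutative, hence cyclic
  obtain ⟨c, hc⟩ := free_comm_cyclic K hcomm
  obtain ⟨p, hp⟩ := hc ⟨a, haK⟩
  obtain ⟨q, hq⟩ := hc ⟨b, hbK⟩
  set g : Matrix.SpecialLinearGroup (Fin n) ℤ := ((c : H) : Matrix.SpecialLinearGroup (Fin n) ℤ)
    with hg
  have hpa : A ^ (k : ℤ) = g ^ p := by
    have := congrArg (fun z : K => ((z : H) : Matrix.SpecialLinearGroup (Fin n) ℤ)) hp
    simpa [ha, hg] using this
  have hqb : B ^ (k : ℤ) = g ^ q := by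
    have := congrArg (fun z : K => ((z : H) : Matrix.SpecialLinearGroup (Fin n) ℤ)) hq
    simpa [hb, hg] using this
  have key : A ^ ((k : ℤ) * q) = B ^ ((k : ℤ) * p) := by
    rw [_root_.zpow_mul, _root_.zpow_mul, hpa, hqb, ← _root_.zpow_mul, ← _root_.zpow_mul, mul_comm]
  rw [hA, hB, slTransvection_zpow, slTransvection_zpow] at key
  have hentry := congrArg (fun M : Matrix.SpecialLinearGroup (Fin n) ℤ =>
    (M : Matrix (Fin n) (Fin n) ℤ) i₀ i₂) key
  have hq0 : (k : ℤ) * q = 0 := by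
    have hrhs : (slTransvection i₁ i₂ h12 ((k : ℤ) * p) :
        Matrix (Fin n) (Fin n) ℤ) i₀ i₂ = 0 := by
      simp [slTransvection, Matrix.transvection, Matrix.add_apply,
        Matrix.one_apply_ne h02, Matrix.single_apply_of_ne _ _ _ _ _
          (by exact fun hh => h01 (hh.1.symm))]
    simpa [slTransvection_apply, hrhs] using hentry
  have hqz : q = 0 := by
    rcases mul_eq_zero.1 hq0 with h | h
    · exact absurd (by exact_mod_cast h) hk0
    · exact h
  have hB1 : B ^ (k : ℤ) = 1 := by rw [hqb, hqz, zpow_zero]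
  rw [hB, slTransvection_zpow, ← slTransvection_zero i₁ i₂ h12] at hB1
  have : (k : ℤ) = 0 := slTransvection_inj i₁ i₂ h12 hB1
  exact hk0 (by exact_mod_cast this)
end
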